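/- arXiv:1809.02086 — 4 statements merged into one kernel-verified Lean document; each statement's English description precedes it below -/
import Mathlib

section
/- Let α ∈ (0,1) be irrational with best approximation denominators q_n and let ω(θ, m) = Σ_{i=1}^m z_i(θ), where z_i(θ) = ±1 according to whether {θ + iα} lies in [0,1/2) or [1/2,1). If ω(0, q_n) = 0, then for every θ ∈ [0,1), ω(θ, q_n) ∈ {0, 2, -2}. -/
/-- The ±1 coding of the rotation orbit: `1` if `{θ + iα} ∈ [0,1/2)`, `-1` otherwise. -/
noncomputable def zCode (α θ : ℝ) (i : ℕ) : ℤ :=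
  if Int.fract (θ + i * α) < 1 / 2 then 1 else -1

/-- The deterministic walk `ω(θ, m) = Σ_{i=1}^m z_i(θ)`. -/
noncomputable def walk (α θ : ℝ) (m : ℕ) : ℤ :=
  ∑ i ∈ Finset.Icc 1 m, zCode α θ i

noncomputable def chiFn (x : ℝ) : ℤ := if Int.fract x < 1 / 2 then 1 else -1

lemma chiFn_mem (x : ℝ) : chiFn x = 1 ∨ chiFn x = -1 := by
  unfold chiFn; split_ifs <;> simp

lemma chiFn_add_int (x : ℝ) (m : ℤ) : chiFn (x + m) = chiFn x := by
  unfold chiFn; rw [Int.fract_add_intCast]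

lemma chiFn_eq_one {x : ℝ} (h0 : 0 ≤ x) (h1 : x < 1/2) : chiFn x = 1 := by
  unfold chiFn
  rw [Int.fract_eq_self.mpr ⟨h0, by linarith⟩]
  exact if_pos h1

lemma chiFn_eq_neg_one {x : ℝ} (h0 : 1/2 ≤ x) (h1 : x < 1) : chiFn x = -1 := by
  unfold chiFn
  rw [Int.fract_eq_self.mpr ⟨by linarith, h1⟩]
  exact if_neg (by linarith)

lemma chiFn_add_half (x : ℝ) : chiFn (x + 1/2) = - chiFn x := by
  have hfl := Int.fract_add_floor x
  have h0 := Int.fract_nonneg x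
  have h1 := Int.fract_lt_one x
  rcases lt_or_ge (Int.fract x) (1/2) with h | h
  · have e1 : chiFn x = 1 := by unfold chiFn; exact if_pos h
    have hrw : x + 1/2 = (Int.fract x + 1/2) + ((⌊x⌋:ℤ):ℝ) := by linarith
    rw [hrw, chiFn_add_int, e1, chiFn_eq_neg_one (by linarith) (by linarith)]
  · have e1 : chiFn x = -1 := by unfold chiFn; exact if_neg (by linarith)
    have hrw : x + 1/2 = (Int.fract x - 1/2) + ((⌊x⌋ + 1:ℤ):ℝ) := by push_cast; linarith
    rw [hrw, chiFn_add_int, e1, chiFn_eq_one (by linarith) (by linarith)]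
    norm_num

/-- Core combinatorial lemma. -/
lemma core_sum (k : ℕ) (hk : 1 ≤ k) (θ : ℝ) (hθ0 : 0 ≤ θ) (hθ : θ < 1/2)
    (x : ℕ → ℝ)
    (hx : ∀ s : ℕ, s < 2*k → θ + (s:ℝ)/(2*(k:ℝ)) < x s ∧ x s < θ + ((s:ℝ)+1)/(2*(k:ℝ))) :
    (∑ s ∈ Finset.range (2*k), chiFn (x s)) = 0 ∨
    (∑ s ∈ Finset.range (2*k), chiFn (x s)) = 2 ∨
    (∑ s ∈ Finset.range (2*k), chiFn (x s)) = -2 := by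
  have hk0 : (0:ℝ) < (k:ℝ) := by exact_mod_cast hk
  have h2k : (0:ℝ) < 2*(k:ℝ) := by linarith
  have h2kinv : 0 < 1/(2*(k:ℝ)) := by positivity
  obtain ⟨a, ha⟩ : ∃ a : ℝ, a = (k:ℝ) - 2*(k:ℝ)*θ := ⟨_, rfl⟩
  have ha0 : 0 < a := by rw [ha]; nlinarith
  have hak : a ≤ (k:ℝ) := by rw [ha]; nlinarith
  obtain ⟨s₀, hs₀⟩ : ∃ s₀ : ℕ, s₀ = (⌈a⌉ - 1).toNat := ⟨_, rfl⟩
  have hceil1 : 1 ≤ ⌈a⌉ := Int.ceil_pos.mpr ha0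
  have hceilk : ⌈a⌉ ≤ (k:ℤ) := Int.ceil_le.mpr (by exact_mod_cast hak)
  have hs₀k : s₀ < k := by omega
  have huniq : ∀ s : ℕ, s < k → a - 1 < (s:ℝ) → (s:ℝ) < a → s = s₀ := by
    intro s hsk h1 h2
    have hu1 : (s:ℤ) < ⌈a⌉ := Int.lt_ceil.mpr (by exact_mod_cast h2)
    have hu2 : ⌈a⌉ ≤ (s:ℤ) + 1 := Int.ceil_le.mpr (by push_cast; linarith)
    omega
  have hval : ∀ y z : ℝ, 0 ≤ y → y + 1/(2*(k:ℝ)) ≤ 1 →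
      (y + 1/(2*(k:ℝ)) ≤ 1/2 ∨ 1/2 ≤ y) → y < z → z < y + 1/(2*(k:ℝ)) →
      chiFn z = (if y < 1/2 then 1 else -1) := by
    intro y z hy0 hyub hdich h1 h2
    rcases hdich with hd | hd
    · rw [if_pos (by linarith)]
      exact chiFn_eq_one (by linarith) (by linarith)
    · rw [if_neg (not_lt.mpr hd)]
      exact chiFn_eq_neg_one (by linarith) (by linarith)
  have key : ∀ s ∈ Finset.range k, s ≠ s₀ → chiFn (x s) + chiFn (x (k + s)) = 0 := by
    intro s hs hne
    rw [Finset.mem_range] at hs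
    have hsdiv : (s:ℝ)/(2*(k:ℝ))*(2*(k:ℝ)) = (s:ℝ) := by field_simp
    have h1div : 1/(2*(k:ℝ))*(2*(k:ℝ)) = 1 := by field_simp
    have hy0 : 0 ≤ θ + (s:ℝ)/(2*(k:ℝ)) := by
      have : 0 ≤ (s:ℝ)/(2*(k:ℝ)) := by positivity
      linarith
    have hs1 : (s:ℝ) + 1 ≤ (k:ℝ) := by exact_mod_cast hs
    have hfr : ((s:ℝ)+1)/(2*(k:ℝ)) ≤ 1/2 := by
      rw [div_le_iff₀ h2k]; nlinarith
    have hadd : (s:ℝ)/(2*(k:ℝ)) + 1/(2*(k:ℝ)) = ((s:ℝ)+1)/(2*(k:ℝ)) := by ring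
    have hyub : (θ + (s:ℝ)/(2*(k:ℝ))) + 1/(2*(k:ℝ)) ≤ 1 := by
      rw [add_assoc, hadd]; linarith
    have hdich : (θ + (s:ℝ)/(2*(k:ℝ))) + 1/(2*(k:ℝ)) ≤ 1/2 ∨ 1/2 ≤ θ + (s:ℝ)/(2*(k:ℝ)) := by
      by_contra hcon
      push_neg at hcon
      obtain ⟨h1, h2⟩ := hcon
      apply hne
      apply huniq s hs
      · rw [ha]
        have := mul_lt_mul_of_pos_right h1 h2k
        nlinarith [this]
      · rw [ha]
        have := mul_lt_mul_of_pos_right h2 h2k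
        nlinarith [this]
    obtain ⟨hxl, hxu⟩ := hx s (by omega)
    have e1 : chiFn (x s) = (if θ + (s:ℝ)/(2*(k:ℝ)) < 1/2 then 1 else -1) := by
      apply hval _ _ hy0 hyub hdich hxl
      linarith [hxu, hadd]
    obtain ⟨hxl2, hxu2⟩ := hx (k + s) (by omega)
    have hks : ((k + s : ℕ):ℝ) = (k:ℝ) + (s:ℝ) := by push_cast; ring
    have h12 : ((k:ℝ) + (s:ℝ))/(2*(k:ℝ)) = 1/2 + (s:ℝ)/(2*(k:ℝ)) := by
      field_simp
    rw [hks, h12] at hxl2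
    have h12' : (((k:ℝ) + (s:ℝ))+1)/(2*(k:ℝ)) = 1/2 + ((s:ℝ)/(2*(k:ℝ)) + 1/(2*(k:ℝ))) := by
      field_simp
      ring
    rw [hks, h12'] at hxu2
    have e2 : chiFn (x (k+s)) = - (if θ + (s:ℝ)/(2*(k:ℝ)) < 1/2 then 1 else -1) := by
      have hrw : x (k+s) = (x (k+s) - 1/2) + 1/2 := by ring
      rw [hrw, chiFn_add_half]
      have := hval (θ + (s:ℝ)/(2*(k:ℝ))) (x (k+s) - 1/2) hy0 hyub hdich
        (by linarith) (by linarith)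
      rw [this]
    rw [e1, e2]; ring
  have hsplit : ∑ s ∈ Finset.range (2*k), chiFn (x s)
      = ∑ s ∈ Finset.range k, (chiFn (x s) + chiFn (x (k + s))) := by
    rw [Finset.sum_add_distrib]
    have h1 : ∑ s ∈ Finset.range (2*k), chiFn (x s)
        = ∑ s ∈ Finset.Ico 0 k, chiFn (x s) + ∑ s ∈ Finset.Ico k (2*k), chiFn (x s) := by
      rw [Finset.sum_Ico_consecutive _ (Nat.zero_le k) (by omega)]
      rw [← Finset.range_eq_Ico]
    rw [h1, ← Finset.range_eq_Ico, Finset.sum_Ico_eq_sum_range]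
    have h2 : 2*k - k = k := by omega
    rw [h2]
  rw [hsplit, Finset.sum_eq_single_of_mem s₀ (Finset.mem_range.mpr hs₀k) key]
  rcases chiFn_mem (x s₀) with h | h <;> rcases chiFn_mem (x (k+s₀)) with h' | h' <;>
    rw [h, h'] <;> norm_num

lemma zCode_eq_chiFn (α θ : ℝ) (i : ℕ) : zCode α θ i = chiFn (θ + i * α) := rfl

/-- Bridge: if the orbit `{i α}`, `i = 1,…,2k`, hits each interval `(s/(2k),(s+1)/(2k))`
(slot `σ i`) bijectively, then the walk at time `2k` lies in `{0, ±2}`. -/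
lemma bridge (α θ : ℝ) (k : ℕ) (hk : 1 ≤ k) (q : ℕ) (hq2k : q = 2*k)
    (σ : ℕ → ℕ)
    (hσlt : ∀ i ∈ Finset.Icc 1 q, σ i < q)
    (hσinj : ∀ i ∈ Finset.Icc 1 q, ∀ j ∈ Finset.Icc 1 q, σ i = σ j → i = j)
    (hrep : ∀ i ∈ Finset.Icc 1 q,
      ((σ i:ℝ))/(q:ℝ) < Int.fract ((i:ℝ)*α) ∧ Int.fract ((i:ℝ)*α) < ((σ i:ℝ)+1)/(q:ℝ))
    (hθ0 : 0 ≤ θ) (hθ : θ < 1/2) :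
    walk α θ q = 0 ∨ walk α θ q = 2 ∨ walk α θ q = -2 := by
  classical
  have hq1 : 1 ≤ q := by omega
  obtain ⟨x, hxdef⟩ : ∃ x : ℕ → ℝ, x = fun s =>
      θ + ∑ i ∈ (Finset.Icc 1 q).filter (fun j => σ j = s), Int.fract ((i:ℝ)*α) := ⟨_, rfl⟩
  have hfilt : ∀ i ∈ Finset.Icc 1 q,
      (Finset.Icc 1 q).filter (fun j => σ j = σ i) = {i} := by
    intro i hi
    ext j
    simp only [Finset.mem_filter, Finset.mem_singleton]
    constructor
    · rintro ⟨hj, hji⟩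
      exact hσinj j hj i hi hji
    · rintro rfl
      exact ⟨hi, rfl⟩
  have hxσ : ∀ i ∈ Finset.Icc 1 q, x (σ i) = θ + Int.fract ((i:ℝ)*α) := by
    intro i hi
    rw [hxdef]
    simp only
    rw [hfilt i hi, Finset.sum_singleton]
  have hsum : walk α θ q = ∑ s ∈ Finset.range q, chiFn (x s) := by
    unfold walk
    apply Finset.sum_bij (fun i _ => σ i)
    · intro i hi
      exact Finset.mem_range.mpr (hσlt i hi)
    · intro i hi j hj hij
      exact hσinj i hi j hj hij
    · intro b hb
      obtain ⟨a2, ha2, hab⟩ := Finset.surj_on_of_inj_on_of_card_le (fun i (_ : i ∈ Finset.Icc 1 q) => σ i)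
        (fun i hi => Finset.mem_range.mpr (hσlt i hi))
        (fun i j hi hj hij => hσinj i hi j hj hij)
        (by simp [Nat.card_Icc]) b hb
      exact ⟨a2, ha2, hab.symm⟩
    · intro i hi
      rw [zCode_eq_chiFn, hxσ i hi]
      have hfr : θ + (i:ℝ)*α = (θ + Int.fract ((i:ℝ)*α)) + ((⌊(i:ℝ)*α⌋:ℤ):ℝ) := by
        have := Int.fract_add_floor ((i:ℝ)*α)
        linarith
      rw [hfr, chiFn_add_int]
  have hx : ∀ s : ℕ, s < 2*k → θ + (s:ℝ)/(2*(k:ℝ)) < x s ∧ x s < θ + ((s:ℝ)+1)/(2*(k:ℝ)) := by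
    intro s hs
    have hsq : s ∈ Finset.range q := Finset.mem_range.mpr (by omega)
    obtain ⟨i, hi, hbi⟩ := Finset.surj_on_of_inj_on_of_card_le (fun i (_ : i ∈ Finset.Icc 1 q) => σ i)
      (fun i hi => Finset.mem_range.mpr (hσlt i hi))
      (fun i j hi hj hij => hσinj i hi j hj hij)
      (by simp [Nat.card_Icc]) s hsq
    obtain ⟨h1, h2⟩ := hrep i hi
    have hxs : x s = θ + Int.fract ((i:ℝ)*α) := by
      rw [hbi]; exact hxσ i hi
    have hcast : ((q:ℕ):ℝ) = 2*(k:ℝ) := by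
      rw [hq2k]; push_cast; ring
    rw [hxs]
    rw [hbi]
    rw [hcast] at h1 h2
    constructor <;> linarith
  rw [hsum, hq2k]
  exact core_sum k hk θ hθ0 hθ x hx

lemma walk_parity (α θ : ℝ) (m : ℕ) : Even (walk α θ m - m) := by
  induction m with
  | zero => simp [walk]
  | succ m ih =>
    have h : walk α θ (m+1) = walk α θ m + zCode α θ (m+1) := by
      unfold walk; rw [Finset.sum_Icc_succ_top (by omega)]
    have hz : Even (zCode α θ (m+1) - 1) := by
      unfold zCode; split_ifs <;> decide
    have heq : walk α θ (m+1) - ((m+1:ℕ):ℤ) = (walk α θ m - m) + (zCode α θ (m+1) - 1) := by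
      rw [h]; push_cast; ring
    rw [heq]; exact ih.add hz

lemma conts_int (v : ℝ) (hnt : ∀ m, ¬(GenContFract.of v).TerminatedAt m) :
    ∀ m, ∃ a b : ℤ, (GenContFract.of v).contsAux m = ⟨(a:ℝ), (b:ℝ)⟩ := by
  intro m
  induction m using Nat.twoStepInduction with
  | zero =>
    refine ⟨1, 0, ?_⟩
    show (⟨1, 0⟩ : GenContFract.Pair ℝ) = _
    norm_num
  | one =>
    refine ⟨⌊v⌋, 1, ?_⟩
    show (⟨(GenContFract.of v).h, 1⟩ : GenContFract.Pair ℝ) = _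
    rw [GenContFract.of_h_eq_floor]
    norm_num
  | more n ih1 ih2 =>
    obtain ⟨gp, hgp⟩ : ∃ gp, (GenContFract.of v).s.get? n = some gp :=
      Option.ne_none_iff_exists'.mp (hnt n)
    obtain ⟨ha1, z, hz⟩ := GenContFract.of_partNum_eq_one_and_exists_int_partDen_eq hgp
    obtain ⟨a, b, hab⟩ := ih1
    obtain ⟨a', b', hab'⟩ := ih2
    refine ⟨z*a' + a, z*b' + b, ?_⟩
    rw [GenContFract.contsAux_recurrence hgp hab hab', ha1, hz]
    simp only [GenContFract.Pair.mk.injEq]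
    constructor <;> push_cast <;> ring

lemma Icc_mod_inj {q i j : ℕ} (hi1 : 1 ≤ i) (hi2 : i ≤ q) (hj1 : 1 ≤ j) (hj2 : j ≤ q)
    (h : i % q = j % q) : i = j := by
  by_cases hiq : i < q <;> by_cases hjq : j < q
  · rwa [Nat.mod_eq_of_lt hiq, Nat.mod_eq_of_lt hjq] at h
  · have hj' : j = q := by omega
    rw [Nat.mod_eq_of_lt hiq, hj', Nat.mod_self] at h; omega
  · have hi' : i = q := by omega
    rw [hi', Nat.mod_self, Nat.mod_eq_of_lt hjq] at h; omega
  · omega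

set_option maxHeartbeats 1600000 in
/-- If `ω(0, q_n) = 0` then `ω(θ, q_n) ∈ {0, 2, -2}` for every `θ ∈ [0,1)`. -/
theorem walk_translation_even_case (α : ℝ) (hα : Irrational α)
    (hα01 : α ∈ Set.Ioo (0 : ℝ) 1) (n : ℕ) (qn : ℕ)
    (hqn : (qn : ℝ) = (GenContFract.of α).dens n)
    (h0 : walk α 0 qn = 0) (θ : ℝ) (hθ : θ ∈ Set.Ico (0 : ℝ) 1) :
    walk α θ qn = 0 ∨ walk α θ qn = 2 ∨ walk α θ qn = -2 := by
  classical
  obtain ⟨hθ0, hθ1⟩ := hθ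
  have hnt : ∀ m, ¬(GenContFract.of α).TerminatedAt m := by
    intro m hm
    obtain ⟨r, hr⟩ := GenContFract.exists_rat_eq_of_terminates ⟨m, hm⟩
    exact hα ⟨r, hr.symm⟩
  have hdens1 : ∀ m, (1:ℝ) ≤ (GenContFract.of α).dens m := by
    intro m
    induction m with
    | zero => rw [GenContFract.zeroth_den_eq_one]
    | succ m ih => exact le_trans ih GenContFract.of_den_mono
  have hq1 : 1 ≤ qn := by
    have h := hdens1 n; rw [← hqn] at h; exact_mod_cast h
  have hqeven : Even qn := by
    have hp := walk_parity α 0 qn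
    rw [h0] at hp
    rcases hp with ⟨t, ht⟩
    refine (Int.even_coe_nat qn).mp ⟨-t, by omega⟩
  obtain ⟨k, hk2⟩ := hqeven
  have hk1 : 1 ≤ k := by omega
  have hqn2k : qn = 2*k := by omega
  -- integer continuants
  obtain ⟨p, b, hpb⟩ := conts_int α hnt (n+1)
  obtain ⟨p', b', hpb'⟩ := conts_int α hnt (n+2)
  have hnum : (GenContFract.of α).nums n = (p:ℝ) := by
    rw [GenContFract.num_eq_conts_a]
    show ((GenContFract.of α).contsAux (n+1)).a = _
    rw [hpb]
  have hden : (GenContFract.of α).dens n = (b:ℝ) := by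
    rw [GenContFract.den_eq_conts_b]
    show ((GenContFract.of α).contsAux (n+1)).b = _
    rw [hpb]
  have hnum' : (GenContFract.of α).nums (n+1) = (p':ℝ) := by
    rw [GenContFract.num_eq_conts_a]
    show ((GenContFract.of α).contsAux (n+2)).a = _
    rw [hpb']
  have hden' : (GenContFract.of α).dens (n+1) = (b':ℝ) := by
    rw [GenContFract.den_eq_conts_b]
    show ((GenContFract.of α).contsAux (n+2)).b = _
    rw [hpb']
  have hq0R : (0:ℝ) < (qn:ℝ) := by exact_mod_cast hq1
  have hq0ne : (qn:ℝ) ≠ 0 := ne_of_gt hq0R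
  -- determinant and coprimality
  have hdet' : (GenContFract.of α).nums n * (GenContFract.of α).dens (n+1)
      - (GenContFract.of α).dens n * (GenContFract.of α).nums (n+1) = (-1:ℝ)^(n+1) :=
    SimpContFract.determinant
      (s := ⟨GenContFract.of α, GenContFract.of_isSimpContFract α⟩) (hnt n)
  rw [hnum, hden', ← hqn, hnum'] at hdet'
  have hdetz : p * b' - (qn:ℤ) * p' = (-1:ℤ)^(n+1) := by exact_mod_cast hdet'
  have hcop : IsCoprime p ((qn:ℕ):ℤ) := by
    rcases Nat.even_or_odd (n+1) with he | ho
    · rw [he.neg_one_pow] at hdetz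
      exact ⟨b', -p', by linear_combination hdetz⟩
    · rw [ho.neg_one_pow] at hdetz
      exact ⟨-b', p', by linear_combination -hdetz⟩
  -- approximation
  have habs := GenContFract.abs_sub_convs_le (v := α) (n := n) (hnt n)
  rw [GenContFract.conv_eq_num_div_den, hnum, ← hqn, hden'] at habs
  have hb'R : (qn:ℝ) ≤ (b':ℝ) := by
    have h := GenContFract.of_den_mono (v := α) (n := n)
    rwa [← hqn, hden'] at h
  have happle : |α - (p:ℝ)/(qn:ℝ)| ≤ 1/((qn:ℝ)*(qn:ℝ)) := by
    refine le_trans habs (one_div_le_one_div_of_le (by positivity) (by nlinarith))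
  have happ : |α - (p:ℝ)/(qn:ℝ)| < 1/((qn:ℝ)*(qn:ℝ)) := by
    rcases lt_or_eq_of_le happle with h | h
    · exact h
    · exfalso
      rcases (abs_eq (by positivity)).mp h with h' | h'
      · exact hα ⟨(p:ℚ)/(qn:ℚ) + 1/((qn:ℚ)*(qn:ℚ)), by push_cast; linarith⟩
      · exact hα ⟨(p:ℚ)/(qn:ℚ) - 1/((qn:ℚ)*(qn:ℚ)), by push_cast; linarith⟩
  obtain ⟨c, hc⟩ : ∃ c : ℝ, c = α - (p:ℝ)/(qn:ℝ) := ⟨_, rfl⟩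
  have hcabs : |c| < 1/((qn:ℝ)*(qn:ℝ)) := by rw [hc]; exact happ
  have hcne : c ≠ 0 := by
    rw [hc]
    intro h
    exact hα ⟨(p:ℚ)/(qn:ℚ), by push_cast; linarith [sub_eq_zero.mp h]⟩
  have hcα : α = (p:ℝ)/(qn:ℝ) + c := by rw [hc]; ring
  -- the residue map
  have hqz0 : (0:ℤ) < ((qn:ℕ):ℤ) := by exact_mod_cast hq1
  obtain ⟨P, hPdef⟩ : ∃ P : ℕ, (P:ℤ) = p % ((qn:ℕ):ℤ) :=
    ⟨(p % ((qn:ℕ):ℤ)).toNat, Int.toNat_of_nonneg (Int.emod_nonneg p (by omega))⟩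
  have hPcop : Nat.Coprime P qn := by
    have h1 : IsCoprime (P:ℤ) ((qn:ℕ):ℤ) := by
      rw [hPdef]
      obtain ⟨u, w, huw⟩ := hcop
      refine ⟨u, w + u * (p / ((qn:ℕ):ℤ)), ?_⟩
      rw [Int.emod_def]
      linear_combination huw
    have h2 := Int.isCoprime_iff_gcd_eq_one.mp h1
    rwa [Int.gcd_natCast_natCast] at h2
  -- fract identity
  have hfract : ∀ i : ℕ, 1 ≤ i → i ≤ qn →
      Int.fract ((i:ℝ)*α) = Int.fract ((((i*P) % qn : ℕ):ℝ)/(qn:ℝ) + (i:ℝ)*c) := by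
    intro i h1 h2
    have hcast : (((i*P) % qn : ℕ):ℤ) = ((i:ℤ)*(P:ℤ)) % ((qn:ℕ):ℤ) := by
      rw [Int.natCast_mod]; push_cast; ring_nf
    have d1 : ((qn:ℕ):ℤ) ∣ (p - (P:ℤ)) := ⟨p / ((qn:ℕ):ℤ), by rw [hPdef, Int.emod_def]; ring⟩
    have d2 : ((qn:ℕ):ℤ) ∣ ((i:ℤ)*(P:ℤ) - ((i:ℤ)*(P:ℤ)) % ((qn:ℕ):ℤ)) :=
      ⟨((i:ℤ)*(P:ℤ))/((qn:ℕ):ℤ), by rw [Int.emod_def]; ring⟩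
    have hdvd : ((qn:ℕ):ℤ) ∣ ((i:ℤ)*p - (((i*P) % qn : ℕ):ℤ)) := by
      have heq : (i:ℤ)*p - (((i*P) % qn : ℕ):ℤ)
          = (i:ℤ)*(p - (P:ℤ)) + ((i:ℤ)*(P:ℤ) - ((i:ℤ)*(P:ℤ)) % ((qn:ℕ):ℤ)) := by
        rw [hcast]; ring
      rw [heq]
      exact dvd_add (Dvd.dvd.mul_left d1 _) d2
    obtain ⟨K, hK⟩ := hdvd
    have hKR : (i:ℝ)*(p:ℝ) - (((i*P) % qn : ℕ):ℝ) = (qn:ℝ)*((K:ℤ):ℝ) := by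
      have hKR' := congrArg (Int.cast : ℤ → ℝ) hK
      simp only [Int.cast_sub, Int.cast_mul, Int.cast_natCast] at hKR'
      linarith [hKR']
    have hthis : (((i*P) % qn : ℕ):ℝ)/(qn:ℝ) + ((K:ℤ):ℝ) = ((i:ℝ)*(p:ℝ))/(qn:ℝ) := by
      rw [eq_div_iff hq0ne, add_mul, div_mul_cancel₀ _ hq0ne]
      linarith [hKR]
    have hrw : (i:ℝ)*α = ((((i*P) % qn : ℕ):ℝ)/(qn:ℝ) + (i:ℝ)*c) + ((K:ℤ):ℝ) := by
      rw [hcα]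
      linear_combination -hthis
    rw [hrw, Int.fract_add_intCast]
  -- bound on i*c
  have hic : ∀ i : ℕ, 1 ≤ i → i ≤ qn → |(i:ℝ)*c| < 1/(qn:ℝ) := by
    intro i h1 h2
    have hiR : (0:ℝ) < (i:ℝ) := by exact_mod_cast h1
    have hiq : (i:ℝ) ≤ (qn:ℝ) := by exact_mod_cast h2
    have h3 : |(i:ℝ)*c| = (i:ℝ)*|c| := by rw [abs_mul, abs_of_pos hiR]
    rw [h3]
    calc (i:ℝ)*|c| ≤ (qn:ℝ)*|c| := by nlinarith [abs_nonneg c]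
      _ < (qn:ℝ)*(1/((qn:ℝ)*(qn:ℝ))) := by nlinarith [hcabs]
      _ = 1/(qn:ℝ) := by field_simp
  have hmodlt : ∀ i : ℕ, (i*P) % qn < qn := fun i => Nat.mod_lt _ (by omega)
  -- main statement for θ' ∈ [0, 1/2)
  have main : ∀ θ' : ℝ, 0 ≤ θ' → θ' < 1/2 →
      walk α θ' qn = 0 ∨ walk α θ' qn = 2 ∨ walk α θ' qn = -2 := by
    intro θ' hθ'0 hθ'1
    rcases hcne.lt_or_gt with hneg | hpos
    · -- c < 0
      apply bridge α θ' k hk1 qn hqn2k (fun i => (i*P + (qn-1)) % qn)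
      · intro i _; exact Nat.mod_lt _ (by omega)
      · intro i hi j hj hij
        rw [Finset.mem_Icc] at hi hj
        have h1 : i*P + (qn-1) ≡ j*P + (qn-1) [MOD qn] := hij
        have h2 : i*P ≡ j*P [MOD qn] := Nat.ModEq.add_right_cancel' _ h1
        have h3 : i ≡ j [MOD qn] := Nat.ModEq.cancel_right_of_coprime hPcop.symm h2
        exact Icc_mod_inj hi.1 hi.2 hj.1 hj.2 h3
      · intro i hi
        rw [Finset.mem_Icc] at hi
        have hRq := hmodlt i
        have hicb := hic i hi.1 hi.2
        have hicneg : (i:ℝ)*c < 0 := by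
          have hiR : (0:ℝ) < (i:ℝ) := by exact_mod_cast hi.1
          exact mul_neg_of_pos_of_neg hiR hneg
        have hiclb : -(1/(qn:ℝ)) < (i:ℝ)*c := by
          rcases abs_lt.mp hicb with ⟨hl, _⟩; linarith
        have h1qle : 1/(qn:ℝ) ≤ 1 := by
          rw [div_le_one hq0R]; exact_mod_cast hq1
        have h1qpos : (0:ℝ) < 1/(qn:ℝ) := by positivity
        obtain ⟨t, hT⟩ : ∃ t, qn * t + (i*P) % qn = i*P := ⟨(i*P)/qn, Nat.div_add_mod _ _⟩
        show (((i*P + (qn-1)) % qn : ℕ):ℝ)/(qn:ℝ) < Int.fract ((i:ℝ)*α) ∧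
          Int.fract ((i:ℝ)*α) < ((((i*P + (qn-1)) % qn : ℕ):ℝ)+1)/(qn:ℝ)
        rw [hfract i hi.1 hi.2]
        by_cases hR0 : (i*P) % qn = 0
        · have hσ : (i*P + (qn-1)) % qn = qn - 1 := by
            have he : i*P + (qn-1) = qn*t + (qn-1) := by omega
            rw [he, Nat.mul_add_mod, Nat.mod_eq_of_lt (by omega)]
          rw [hσ, hR0]
          have hz : ((0:ℕ):ℝ)/(qn:ℝ) + (i:ℝ)*c = ((i:ℝ)*c + 1) + ((-1:ℤ):ℝ) := by
            push_cast; ring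
          have hself : Int.fract ((i:ℝ)*c + 1) = (i:ℝ)*c + 1 :=
            Int.fract_eq_self.mpr ⟨by linarith, by linarith⟩
          rw [hz, Int.fract_add_intCast, hself]
          have hc1 : ((qn - 1 : ℕ):ℝ) = (qn:ℝ) - 1 := by
            push_cast [Nat.cast_sub hq1]; ring
          rw [hc1]
          have e1 : ((qn:ℝ)-1)/(qn:ℝ) = 1 - 1/(qn:ℝ) := by
            rw [sub_div, div_self hq0ne]
          have e2 : ((qn:ℝ)-1+1)/(qn:ℝ) = 1 := by
            rw [sub_add_cancel, div_self hq0ne]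
          rw [e1, e2]
          constructor <;> linarith
        · have hR1 : 1 ≤ (i*P) % qn := by omega
          have hσ : (i*P + (qn-1)) % qn = (i*P) % qn - 1 := by
            have he : i*P + (qn-1) = qn*t + (qn + ((i*P) % qn - 1)) := by omega
            rw [he, Nat.mul_add_mod, Nat.add_mod_left, Nat.mod_eq_of_lt (by omega)]
          rw [hσ]
          have hRcast : (((i*P) % qn - 1 : ℕ):ℝ) = (((i*P) % qn : ℕ):ℝ) - 1 := by
            push_cast [Nat.cast_sub hR1]; ring
          have hRub : (((i*P) % qn : ℕ):ℝ) ≤ (qn:ℝ) - 1 := by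
            have hle : (i*P) % qn ≤ qn - 1 := by omega
            calc (((i*P) % qn : ℕ):ℝ) ≤ ((qn - 1 : ℕ):ℝ) := by exact_mod_cast hle
              _ = (qn:ℝ) - 1 := by push_cast [Nat.cast_sub hq1]; ring
          have hRlb : (1:ℝ) ≤ (((i*P) % qn : ℕ):ℝ) := by exact_mod_cast hR1
          have hRdivlb : 1/(qn:ℝ) ≤ (((i*P) % qn : ℕ):ℝ)/(qn:ℝ) := by gcongr
          have hRdivub : (((i*P) % qn : ℕ):ℝ)/(qn:ℝ) ≤ ((qn:ℝ)-1)/(qn:ℝ) := by gcongr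
          have e1 : ((qn:ℝ)-1)/(qn:ℝ) = 1 - 1/(qn:ℝ) := by
            rw [sub_div, div_self hq0ne]
          have h1qpos : (0:ℝ) < 1/(qn:ℝ) := by positivity
          have hself : Int.fract ((((i*P) % qn : ℕ):ℝ)/(qn:ℝ) + (i:ℝ)*c)
              = (((i*P) % qn : ℕ):ℝ)/(qn:ℝ) + (i:ℝ)*c := by
            apply Int.fract_eq_self.mpr
            constructor
            · linarith
            · rw [e1] at hRdivub; linarith
          rw [hself, hRcast]
          have e3 : ((((i*P) % qn : ℕ):ℝ) - 1)/(qn:ℝ)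
              = (((i*P) % qn : ℕ):ℝ)/(qn:ℝ) - 1/(qn:ℝ) := by rw [sub_div]
          have e4 : ((((i*P) % qn : ℕ):ℝ) - 1 + 1)/(qn:ℝ)
              = (((i*P) % qn : ℕ):ℝ)/(qn:ℝ) := by rw [sub_add_cancel]
          rw [e3, e4]
          constructor <;> linarith
      · exact hθ'0
      · exact hθ'1
    · -- c > 0
      apply bridge α θ' k hk1 qn hqn2k (fun i => (i*P) % qn)
      · intro i _; exact hmodlt i
      · intro i hi j hj hij
        rw [Finset.mem_Icc] at hi hj
        have h3 : i ≡ j [MOD qn] := Nat.ModEq.cancel_right_of_coprime hPcop.symm hij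
        exact Icc_mod_inj hi.1 hi.2 hj.1 hj.2 h3
      · intro i hi
        rw [Finset.mem_Icc] at hi
        have hRq := hmodlt i
        have hicb := hic i hi.1 hi.2
        have hicpos : 0 < (i:ℝ)*c := by
          have hiR : (0:ℝ) < (i:ℝ) := by exact_mod_cast hi.1
          exact mul_pos hiR hpos
        have hicub : (i:ℝ)*c < 1/(qn:ℝ) := lt_of_abs_lt hicb
        show (((i*P) % qn : ℕ):ℝ)/(qn:ℝ) < Int.fract ((i:ℝ)*α) ∧
          Int.fract ((i:ℝ)*α) < ((((i*P) % qn : ℕ):ℝ)+1)/(qn:ℝ)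
        rw [hfract i hi.1 hi.2]
        have hRub : (((i*P) % qn : ℕ):ℝ) ≤ (qn:ℝ) - 1 := by
          have hle : (i*P) % qn ≤ qn - 1 := by omega
          calc (((i*P) % qn : ℕ):ℝ) ≤ ((qn - 1 : ℕ):ℝ) := by exact_mod_cast hle
            _ = (qn:ℝ) - 1 := by push_cast [Nat.cast_sub hq1]; ring
        have hRdivlb : (0:ℝ) ≤ (((i*P) % qn : ℕ):ℝ)/(qn:ℝ) := by positivity
        have hRdivub : (((i*P) % qn : ℕ):ℝ)/(qn:ℝ) ≤ ((qn:ℝ)-1)/(qn:ℝ) := by gcongr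
        have e1 : ((qn:ℝ)-1)/(qn:ℝ) = 1 - 1/(qn:ℝ) := by
          rw [sub_div, div_self hq0ne]
        have hself : Int.fract ((((i*P) % qn : ℕ):ℝ)/(qn:ℝ) + (i:ℝ)*c)
            = (((i*P) % qn : ℕ):ℝ)/(qn:ℝ) + (i:ℝ)*c := by
          apply Int.fract_eq_self.mpr
          constructor
          · linarith
          · rw [e1] at hRdivub; linarith
        rw [hself]
        have e5 : ((((i*P) % qn : ℕ):ℝ) + 1)/(qn:ℝ)
            = (((i*P) % qn : ℕ):ℝ)/(qn:ℝ) + 1/(qn:ℝ) := by rw [add_div]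
        rw [e5]
        constructor <;> linarith
      · exact hθ'0
      · exact hθ'1
  rcases lt_or_ge θ (1/2) with h12 | h12
  · exact main θ hθ0 h12
  · have hflip : walk α θ qn = - walk α (θ - 1/2) qn := by
      unfold walk
      rw [← Finset.sum_neg_distrib]
      apply Finset.sum_congr rfl
      intro i _
      rw [zCode_eq_chiFn, zCode_eq_chiFn]
      have h : θ + (i:ℝ)*α = ((θ - 1/2) + (i:ℝ)*α) + 1/2 := by ring
      rw [h, chiFn_add_half]
    rcases main (θ - 1/2) (by linarith) (by linarith) with h | h | h <;>
      rw [hflip, h] <;> omega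
end

section
/- Let α ∈ (0,1) be irrational with best approximation denominators q_n, and ω(m) = Σ_{i=1}^m z_i where z_i = 1 if {iα} ∈ [0,1/2) and z_i = -1 otherwise. If q_n is odd and k is a positive integer with k q_n < q_{n+1}, then |ω(k q_n)| ≤ k. -/
open GenContFract

lemma my_not_term {v : ℝ} (hv : Irrational v) (m : ℕ) : ¬(GenContFract.of v).TerminatedAt m := by
  intro h
  obtain ⟨q, hq⟩ := GenContFract.exists_rat_eq_of_terminates ⟨m, h⟩
  exact hv ⟨q, hq.symm⟩

lemma my_int (v : ℝ) (hnt : ∀ m, ¬(GenContFract.of v).TerminatedAt m) :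
    ∀ m, (∃ z : ℤ, (GenContFract.of v).nums m = z) ∧ ∃ z : ℤ, (GenContFract.of v).dens m = z := by
  have hs : ∀ m, ∃ gp, (GenContFract.of v).s.get? m = some gp := by
    intro m
    exact Option.ne_none_iff_exists'.1 (hnt m)
  have key : ∀ m, ∀ gp, (GenContFract.of v).s.get? m = some gp →
      gp.a = 1 ∧ ∃ z : ℤ, gp.b = (z : ℝ) := fun m gp h =>
    GenContFract.of_partNum_eq_one_and_exists_int_partDen_eq h
  intro m
  induction m using Nat.strong_induction_on with
  | _ m ih =>
    match m with
    | 0 =>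
      refine ⟨⟨⌊v⌋, ?_⟩, ⟨1, ?_⟩⟩
      · rw [GenContFract.zeroth_num_eq_h, GenContFract.of_h_eq_floor]
      · rw [GenContFract.zeroth_den_eq_one]; norm_num
    | 1 =>
      obtain ⟨gp, hgp⟩ := hs 0
      obtain ⟨ha, z, hz⟩ := key 0 gp hgp
      refine ⟨⟨z * ⌊v⌋ + 1, ?_⟩, ⟨z, ?_⟩⟩
      · rw [GenContFract.first_num_eq hgp, GenContFract.of_h_eq_floor, ha, hz]; push_cast; ring
      · rw [GenContFract.first_den_eq hgp, hz]
    | (m + 2) =>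
      obtain ⟨gp, hgp⟩ := hs (m + 1)
      obtain ⟨ha, z, hz⟩ := key (m + 1) gp hgp
      obtain ⟨⟨za, hza⟩, ⟨zb, hzb⟩⟩ := ih m (by omega)
      obtain ⟨⟨za', hza'⟩, ⟨zb', hzb'⟩⟩ := ih (m + 1) (by omega)
      refine ⟨⟨z * za' + za, ?_⟩, ⟨z * zb' + zb, ?_⟩⟩
      · rw [GenContFract.nums_recurrence hgp hza hza', ha, hz]; push_cast; ring
      · rw [GenContFract.dens_recurrence hgp hzb hzb', ha, hz]; push_cast; ring

lemma block_sum (α : ℝ) (p : ℤ) (l q : ℕ) (hq : q = 2 * l + 1)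
    (hcop : IsCoprime p (q : ℤ)) (a : ℕ)
    (hd0 : (q : ℝ) * α - p ≠ 0)
    (hbound : ((a : ℝ) + q) * |(q : ℝ) * α - p| < 1) :
    |∑ m ∈ Finset.Ioc a (a + q), (if Int.fract ((m : ℝ) * α) < 1 / 2 then (1 : ℤ) else -1)| ≤ 1 := by
  rcases Nat.eq_zero_or_pos l with hl0 | hl1
  · subst hl0
    simp only [hq]
    rw [show a + (2*0+1) = a + 1 by ring, Nat.Ioc_succ_singleton, Finset.sum_singleton]
    split <;> norm_num
  set δ : ℝ := (q : ℝ) * α - p with hδdef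
  clear_value δ
  have hqpos : 0 < q := by omega
  have hqR : (0 : ℝ) < q := by exact_mod_cast hqpos
  have hqZ : (q : ℤ) ≠ 0 := by exact_mod_cast hqpos.ne'
  set blk := Finset.Ioc a (a + q) with hblk
  set r : ℕ → ℕ := fun m => ((m : ℤ) * p % (q : ℤ)).toNat with hr
  have hrZ : ∀ m, ((r m : ℤ)) = (m : ℤ) * p % (q : ℤ) := by
    intro m
    exact Int.toNat_of_nonneg (Int.emod_nonneg _ hqZ)
  have hrlt : ∀ m, r m < q := by
    intro m
    have h2 := Int.emod_lt_of_pos ((m : ℤ) * p) (by exact_mod_cast hqpos : (0:ℤ) < q)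
    have h3 := hrZ m
    omega
  have hinj : Set.InjOn r blk := by
    intro m hm m' hm' hrr
    simp only [hblk, Finset.coe_Ioc, Set.mem_Ioc] at hm hm'
    have h1 : ((m : ℤ) * p) % q = ((m' : ℤ) * p) % q := by rw [← hrZ, ← hrZ, hrr]
    have h2 : (q : ℤ) ∣ ((m' : ℤ) - m) * p := by
      have h2' : (q : ℤ) ∣ (m' : ℤ) * p - (m : ℤ) * p := Int.ModEq.dvd h1
      have : ((m' : ℤ) - m) * p = (m' : ℤ) * p - (m : ℤ) * p := by ring
      rwa [this]
    have h3 : (q : ℤ) ∣ ((m' : ℤ) - m) := (hcop.symm).dvd_of_dvd_mul_right h2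
    have h4 : (m' : ℤ) - m = 0 := by
      by_contra h
      have h5 : (q : ℤ) ≤ |(m' : ℤ) - m| := Int.le_of_dvd (abs_pos.mpr h) ((dvd_abs _ _).mpr h3)
      have h6 : |(m' : ℤ) - m| < q := by
        rw [abs_lt]
        omega
      linarith
    omega
  have himg : blk.image r = Finset.range q := by
    apply Finset.eq_of_subset_of_card_le
    · intro x hx
      simp only [Finset.mem_image] at hx
      obtain ⟨m, _, rfl⟩ := hx
      exact Finset.mem_range.mpr (hrlt m)
    · rw [Finset.card_range, Finset.card_image_of_injOn hinj, hblk, Nat.card_Ioc]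
      omega
  have hcount : ∀ S : Finset ℕ, S ⊆ Finset.range q →
      (blk.filter (fun m => r m ∈ S)).card = S.card := by
    intro S hS
    have h1 : (blk.filter (fun m => r m ∈ S)).image r = S := by
      rw [← Finset.filter_image (f := r) (p := (· ∈ S)), himg, Finset.filter_mem_eq_inter, Finset.inter_eq_right.mpr hS]
    rw [← Finset.card_image_of_injOn (hinj.mono (by
      intro x hx
      exact Finset.mem_coe.mpr (Finset.mem_of_mem_filter x (Finset.mem_coe.mp hx)))), h1]
  -- fract formula
  have hfr : ∀ m ∈ blk, Int.fract ((m : ℝ) * α) = Int.fract (((r m : ℝ) + m * δ) / q) := by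
    intro m hm
    have hz : (m : ℤ) * p = (q : ℤ) * ((m : ℤ) * p / (q : ℤ)) + (r m : ℤ) := by
      rw [hrZ]
      exact (Int.mul_ediv_add_emod _ _).symm
    have hdm : (m : ℝ) * (p : ℝ) = (q : ℝ) * (((m : ℤ) * p / (q : ℤ) : ℤ) : ℝ) + (r m : ℝ) := by
      exact_mod_cast congrArg (Int.cast : ℤ → ℝ) hz
    have key : (m : ℝ) * α = (((m : ℤ) * p / (q : ℤ) : ℤ) : ℝ) + ((r m : ℝ) + m * δ) / q := by
      rw [hδdef]
      field_simp
      linear_combination hdm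
    rw [key, Int.fract_intCast_add]
  -- finishing framework
  have hqR2 : (q : ℝ) = 2 * (l : ℝ) + 1 := by exact_mod_cast hq
  have hfin : ∀ S₁ S₂ : Finset ℕ, S₁ ⊆ S₂ → S₂ ⊆ Finset.range q → S₁.card = l → S₂.card = l + 1 →
      (∀ m ∈ blk, (r m ∈ S₁ → Int.fract ((m : ℝ) * α) < 1 / 2) ∧
        (Int.fract ((m : ℝ) * α) < 1 / 2 → r m ∈ S₂)) →
      |∑ m ∈ blk, (if Int.fract ((m : ℝ) * α) < 1 / 2 then (1 : ℤ) else -1)| ≤ 1 := by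
    intro S₁ S₂ h12 h2r hc1 hc2 himp
    classical
    set c := (blk.filter (fun m : ℕ => Int.fract ((m : ℝ) * α) < 1 / 2)).card with hc
    have hlow : l ≤ c := by
      rw [← hc1, ← hcount S₁ (h12.trans h2r)]
      apply Finset.card_le_card
      intro x hx
      simp only [Finset.mem_filter] at hx ⊢
      exact ⟨hx.1, (himp x hx.1).1 hx.2⟩
    have hhigh : c ≤ l + 1 := by
      rw [← hc2, ← hcount S₂ h2r]
      apply Finset.card_le_card
      intro x hx
      simp only [Finset.mem_filter] at hx ⊢
      exact ⟨hx.1, (himp x hx.1).2 hx.2⟩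
    have hsum : ∑ m ∈ blk, (if Int.fract ((m : ℝ) * α) < 1 / 2 then (1 : ℤ) else -1)
        = 2 * (c : ℤ) - q := by
      have e1 : ∀ m ∈ blk, (if Int.fract ((m : ℝ) * α) < 1 / 2 then (1 : ℤ) else -1)
          = 2 * (if Int.fract ((m : ℝ) * α) < 1 / 2 then (1 : ℤ) else 0) - 1 := by
        intro m _
        split <;> ring
      rw [Finset.sum_congr rfl e1, Finset.sum_sub_distrib, ← Finset.mul_sum, Finset.sum_boole,
        Finset.sum_const, hblk, Nat.card_Ioc]
      simp only [hc, nsmul_eq_mul, mul_one]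
      congr 1
      omega
    rw [hsum, abs_le]
    constructor
    · have : (l : ℤ) ≤ c := by exact_mod_cast hlow
      have hq' : (q : ℤ) = 2 * l + 1 := by exact_mod_cast hq
      omega
    · have : (c : ℤ) ≤ l + 1 := by exact_mod_cast hhigh
      have hq' : (q : ℤ) = 2 * l + 1 := by exact_mod_cast hq
      omega
  -- per-element facts
  have hmfacts : ∀ m ∈ blk, (1 : ℝ) ≤ (m : ℝ) ∧ (m : ℝ) * |δ| < 1 := by
    intro m hm
    simp only [hblk, Finset.mem_Ioc] at hm
    have h1 : (1 : ℝ) ≤ (m : ℝ) := by exact_mod_cast Nat.one_le_iff_ne_zero.mpr (by omega)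
    refine ⟨h1, ?_⟩
    have h2 : (m : ℝ) ≤ (a : ℝ) + q := by exact_mod_cast hm.2
    calc (m : ℝ) * |δ| ≤ ((a : ℝ) + q) * |δ| :=
          mul_le_mul_of_nonneg_right h2 (abs_nonneg _)
      _ < 1 := hbound
  have hrub : ∀ m : ℕ, (r m : ℝ) ≤ (q : ℝ) - 1 := by
    intro m
    have h := hrlt m
    have : ((r m : ℝ)) + 1 ≤ (q : ℝ) := by exact_mod_cast h
    linarith
  rcases lt_or_gt_of_ne hd0 with hneg | hpos
  · -- δ < 0
    apply hfin (Finset.Icc 1 l) (Finset.Icc 1 (l + 1))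
    · exact Finset.Icc_subset_Icc le_rfl (by omega)
    · intro x hx
      simp only [Finset.mem_Icc] at hx
      exact Finset.mem_range.mpr (by omega)
    · rw [Nat.card_Icc]; omega
    · rw [Nat.card_Icc]; omega
    intro m hm
    obtain ⟨hm1, hm2⟩ := hmfacts m hm
    have ht0 : -1 < (m : ℝ) * δ := by
      have : |(m : ℝ) * δ| < 1 := by rwa [abs_mul, abs_of_nonneg (by linarith : (0:ℝ) ≤ (m:ℝ))]
      linarith [abs_lt.mp this |>.1]
    have ht1 : (m : ℝ) * δ < 0 := mul_neg_of_pos_of_neg (by linarith) hneg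
    constructor
    · intro hS
      simp only [Finset.mem_Icc] at hS
      have hr1 : (1 : ℝ) ≤ (r m : ℝ) := by exact_mod_cast hS.1
      have hr2 : (r m : ℝ) ≤ (l : ℝ) := by exact_mod_cast hS.2
      have frval : Int.fract ((m : ℝ) * α) = ((r m : ℝ) + m * δ) / q := by
        rw [hfr m hm, Int.fract_eq_self.mpr
          ⟨div_nonneg (by linarith) hqR.le, by rw [div_lt_one hqR]; linarith [hrub m]⟩]
      rw [frval, div_lt_iff₀ hqR, hqR2]
      linarith
    · intro hcond
      by_contra hS
      simp only [Finset.mem_Icc, not_and, not_le] at hS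
      rcases Nat.eq_zero_or_pos (r m) with hr0 | hrpos
      · -- r m = 0 : fract = 1 + mδ/q > 1/2
        have hq3 : (3 : ℝ) ≤ (q : ℝ) := by
          have : 3 ≤ q := by omega
          exact_mod_cast this
        have hb2 : (m : ℝ) * δ / q < 0 := div_neg_of_neg_of_pos ht1 hqR
        have hb1 : (-1 : ℝ) / 3 < (m : ℝ) * δ / q := by
          rw [div_lt_div_iff₀ (by norm_num) hqR]
          nlinarith
        have hfl : ⌊(m : ℝ) * δ / q⌋ = -1 := by
          rw [Int.floor_eq_iff]
          constructor
          · push_cast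
            linarith
          · push_cast
            linarith
        have frval : Int.fract ((m : ℝ) * α) = (m : ℝ) * δ / q + 1 := by
          rw [hfr m hm, hr0]
          have e : (((0 : ℕ) : ℝ) + (m : ℝ) * δ) / q = (m : ℝ) * δ / q := by push_cast; ring
          rw [e, Int.fract, hfl]
          push_cast
          ring
        rw [frval] at hcond
        linarith
      · have hge : l + 2 ≤ r m := by
          have := hS (by omega)
          omega
        have hr2 : ((l : ℝ)) + 2 ≤ (r m : ℝ) := by exact_mod_cast hge
        have frval : Int.fract ((m : ℝ) * α) = ((r m : ℝ) + m * δ) / q := by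
          rw [hfr m hm, Int.fract_eq_self.mpr
            ⟨div_nonneg (by linarith) hqR.le, by rw [div_lt_one hqR]; linarith [hrub m]⟩]
        rw [frval, div_lt_iff₀ hqR, hqR2] at hcond
        linarith
  · -- δ > 0
    apply hfin (Finset.range l) (Finset.range (l + 1))
    · exact Finset.range_subset_range.mpr (by omega)
    · exact Finset.range_subset_range.mpr (by omega)
    · exact Finset.card_range l
    · exact Finset.card_range (l + 1)
    intro m hm
    obtain ⟨hm1, hm2⟩ := hmfacts m hm
    have ht1 : (m : ℝ) * δ < 1 := by
      have : |(m : ℝ) * δ| < 1 := by rwa [abs_mul, abs_of_nonneg (by linarith : (0:ℝ) ≤ (m:ℝ))]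
      linarith [abs_lt.mp this |>.2]
    have ht0 : 0 < (m : ℝ) * δ := mul_pos (by linarith) hpos
    have frval : Int.fract ((m : ℝ) * α) = ((r m : ℝ) + m * δ) / q := by
      rw [hfr m hm, Int.fract_eq_self.mpr
        ⟨div_nonneg (by positivity) hqR.le, by rw [div_lt_one hqR]; linarith [hrub m]⟩]
    constructor
    · intro hS
      have hr2 : (r m : ℝ) ≤ (l : ℝ) - 1 := by
        have : r m + 1 ≤ l := Finset.mem_range.mp hS
        have h' : ((r m : ℝ)) + 1 ≤ (l : ℝ) := by exact_mod_cast this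
        linarith
      rw [frval, div_lt_iff₀ hqR, hqR2]
      linarith
    · intro hcond
      by_contra hS
      have hge : l + 1 ≤ r m := by
        have := Finset.mem_range.not.mp hS
        omega
      have hr2 : ((l : ℝ)) + 1 ≤ (r m : ℝ) := by exact_mod_cast hge
      rw [frval, div_lt_iff₀ hqR, hqR2] at hcond
      linarith

/-- If `q_n` is odd and `k q_n < q_{n+1}` then `|ω(k q_n)| ≤ k`. -/
theorem walk_multiple_of_odd_denominator (α : ℝ) (hα : Irrational α)
    (hα01 : α ∈ Set.Ioo (0 : ℝ) 1) (n : ℕ) (qn : ℕ)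
    (hqn : (qn : ℝ) = (GenContFract.of α).dens n) (hodd : Odd qn)
    (k : ℕ) (hk0 : 0 < k) (hk : ((k * qn : ℕ) : ℝ) < (GenContFract.of α).dens (n + 1)) :
    |walk α 0 (k * qn)| ≤ (k : ℤ) := by
  have hnt : ∀ m, ¬(GenContFract.of α).TerminatedAt m := my_not_term hα
  obtain ⟨l, hl⟩ := hodd
  have hl' : qn = 2 * l + 1 := by omega
  have hq1 : 1 ≤ qn := by omega
  have hqR : (0 : ℝ) < qn := by exact_mod_cast hq1
  obtain ⟨⟨p, hp⟩, -⟩ := my_int α hnt n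
  obtain ⟨⟨N, hN⟩, ⟨D, hD⟩⟩ := my_int α hnt (n + 1)
  have hDpos : (1 : ℝ) ≤ (GenContFract.of α).dens (n + 1) := by
    calc (1 : ℝ) ≤ (Nat.fib (n + 2) : ℝ) := by
          exact_mod_cast Nat.fib_pos.mpr (by omega)
      _ ≤ _ := GenContFract.succ_nth_fib_le_of_nth_den (n := n + 1) (Or.inr (hnt n))
  have hD1 : (1 : ℤ) ≤ D := by
    have : (1 : ℝ) ≤ (D : ℝ) := hD ▸ hDpos
    exact_mod_cast this
  have hDR : (0 : ℝ) < D := by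
    have : (1 : ℝ) ≤ (D : ℝ) := hD ▸ hDpos
    linarith
  -- determinant / coprimality
  have hdet : (GenContFract.of α).nums n * (GenContFract.of α).dens (n + 1) -
      (GenContFract.of α).dens n * (GenContFract.of α).nums (n + 1) = (-1) ^ (n + 1) :=
    SimpContFract.determinant (s := SimpContFract.of α) (hnt n)
  rw [hp, hN, hD, ← hqn] at hdet
  have hdetZ : p * D - (qn : ℤ) * N = (-1) ^ (n + 1) := by exact_mod_cast hdet
  have hcop : IsCoprime p (qn : ℤ) := by
    rcases Nat.even_or_odd (n + 1) with he | ho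
    · rw [Even.neg_one_pow he] at hdetZ
      exact ⟨D, -N, by linarith⟩
    · rw [Odd.neg_one_pow ho] at hdetZ
      exact ⟨-D, N, by linarith⟩
  -- approximation
  have happ := GenContFract.abs_sub_convs_le (v := α) (n := n) (hnt n)
  rw [GenContFract.conv_eq_num_div_den, hp, hD, ← hqn] at happ
  have hδabs : |(qn : ℝ) * α - p| ≤ 1 / D := by
    have e : (qn : ℝ) * α - p = (qn : ℝ) * (α - p / qn) := by
      field_simp
    rw [e, abs_mul, abs_of_pos hqR]
    calc (qn : ℝ) * |α - p / qn| ≤ (qn : ℝ) * (1 / ((qn : ℝ) * D)) := by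
          exact mul_le_mul_of_nonneg_left happ hqR.le
      _ = 1 / D := by field_simp
  have hδ0 : (qn : ℝ) * α - p ≠ 0 := by
    intro h0
    apply hα
    refine ⟨(p : ℚ) / (qn : ℚ), ?_⟩
    have : (qn : ℝ) * α = p := by linarith
    push_cast
    rw [div_eq_iff (by positivity : (qn : ℝ) ≠ 0)]
    linarith
  have hkD : (k * qn : ℤ) ≤ D - 1 := by
    have h1 : ((k * qn : ℕ) : ℝ) < (D : ℝ) := by rw [← hD]; exact hk
    have h2 : ((k * qn : ℕ) : ℤ) < D := by exact_mod_cast h1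
    push_cast at h2 ⊢
    omega
  have hkDR : ((k : ℝ) * qn) ≤ (D : ℝ) - 1 := by exact_mod_cast hkD
  -- per-block bound
  have hbound : ∀ j : ℕ, j < k → (((j * qn : ℕ) : ℝ) + qn) * |(qn : ℝ) * α - p| < 1 := by
    intro j hj
    have h1 : ((j * qn : ℕ) : ℝ) + qn ≤ (k : ℝ) * qn := by
      push_cast
      have : ((j : ℝ) + 1) ≤ k := by exact_mod_cast hj
      nlinarith
    have h2 : (((j * qn : ℕ) : ℝ) + qn) * |(qn : ℝ) * α - p| ≤ ((k : ℝ) * qn) * (1 / D) := by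
      apply mul_le_mul h1 hδabs (abs_nonneg _) (by positivity)
    calc (((j * qn : ℕ) : ℝ) + qn) * |(qn : ℝ) * α - p| ≤ ((k : ℝ) * qn) * (1 / D) := h2
      _ ≤ ((D : ℝ) - 1) * (1 / D) := by
          apply mul_le_mul_of_nonneg_right hkDR (by positivity)
      _ < 1 := by
          rw [sub_mul, one_mul, mul_one_div, div_self hDR.ne']
          have : 0 < 1 / (D : ℝ) := by positivity
          linarith
  -- induction on number of blocks
  suffices H : ∀ k' : ℕ, k' ≤ k → |walk α 0 (k' * qn)| ≤ (k' : ℤ) from H k le_rfl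
  intro k' hk'
  induction k' with
  | zero => simp [walk]
  | succ j ihj =>
    have hblockj := block_sum α p l qn hl' hcop (j * qn) hδ0 (hbound j (by omega))
    have hsplit : walk α 0 ((j + 1) * qn) = walk α 0 (j * qn) +
        ∑ m ∈ Finset.Ioc (j * qn) (j * qn + qn), zCode α 0 m := by
      unfold walk
      rw [show Finset.Icc 1 ((j + 1) * qn) = Finset.Ioc 0 ((j + 1) * qn) from
        (Finset.Icc_add_one_left_eq_Ioc 0 _), show Finset.Icc 1 (j * qn) = Finset.Ioc 0 (j * qn) from
        (Finset.Icc_add_one_left_eq_Ioc 0 _), show (j + 1) * qn = j * qn + qn by ring]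
      exact (Finset.sum_Ioc_consecutive _ (Nat.zero_le _) (by omega)).symm
    have hzeq : ∑ m ∈ Finset.Ioc (j * qn) (j * qn + qn), zCode α 0 m =
        ∑ m ∈ Finset.Ioc (j * qn) (j * qn + qn),
          (if Int.fract ((m : ℝ) * α) < 1 / 2 then (1 : ℤ) else -1) := by
      apply Finset.sum_congr rfl
      intro m _
      simp [zCode]
    calc |walk α 0 ((j + 1) * qn)| ≤ |walk α 0 (j * qn)| +
          |∑ m ∈ Finset.Ioc (j * qn) (j * qn + qn), zCode α 0 m| := by
          rw [hsplit]; exact abs_add_le _ _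
      _ ≤ (j : ℤ) + 1 := by
          have h1 := ihj (by omega)
          rw [hzeq]
          push_cast at hblockj ⊢
          linarith
      _ = ((j + 1 : ℕ) : ℤ) := by push_cast; ring
end

section
/- Let α ∈ (0,1) be irrational with best approximation denominators q_n. Define ω(θ, a, b) = Σ_{i=a}^b z_i(θ) with z_i(θ) = ±1 according to whether {θ + iα} ∈ [0,1/2) or [1/2,1), and M(θ, n) = max_{1≤ℓ≤n} ω(θ, 1, ℓ). Then for every θ and every t with q_n < t ≤ q_{n+1}, M(θ, t) ≤ M(θ, q_n) + 3⌈t/q_n⌉. -/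
/-- `M(θ, k) = max_{1 ≤ ℓ ≤ k} ω(θ, ℓ)`. -/
noncomputable def maxWalk (α θ : ℝ) (k : ℕ) : ℤ :=
  sSup {m : ℤ | ∃ ℓ, 1 ≤ ℓ ∧ ℓ ≤ k ∧ walk α θ ℓ = m}

/-- `m(θ, k) = min_{1 ≤ ℓ ≤ k} ω(θ, ℓ)`. -/
noncomputable def minWalk (α θ : ℝ) (k : ℕ) : ℤ :=
  sInf {m : ℤ | ∃ ℓ, 1 ≤ ℓ ∧ ℓ ≤ k ∧ walk α θ ℓ = m}

lemma key_count (q : ℕ) (hq : 2 ≤ q) (w : ℕ → ℝ) (κ : ℕ → ℕ)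
    (hκlt : ∀ i ∈ Finset.Icc 1 q, κ i < q)
    (hκinj : Set.InjOn κ (Finset.Icc 1 q))
    (h : ∀ i ∈ Finset.Icc 1 q, ∃ m : ℤ,
      (κ i : ℝ) ≤ q * (w i - m) ∧ q * (w i - m) < (κ i : ℝ) + 2) :
    |∑ i ∈ Finset.Icc 1 q, (if Int.fract (w i) < 1/2 then (1:ℤ) else -1)| ≤ 3 := by
  have hq0 : (0:ℝ) < q := by positivity
  have hq2 : (2:ℝ) ≤ q := by exact_mod_cast hq
  set I := Finset.Icc 1 q with hI
  set F := I.filter (fun i => ¬ (Int.fract (w i) < 1/2)) with hF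
  have hsum : ∑ i ∈ I, (if Int.fract (w i) < 1/2 then (1:ℤ) else -1)
      = (q : ℤ) - 2 * F.card := by
    have hpt : ∀ i, (if Int.fract (w i) < 1/2 then (1:ℤ) else -1)
        = 1 - 2 * (if ¬ (Int.fract (w i) < 1/2) then (1:ℤ) else 0) := by
      intro i; by_cases hi : Int.fract (w i) < 1/2
      · rw [if_pos hi, if_neg (not_not_intro hi)]; ring
      · rw [if_neg hi, if_pos hi]; ring
    rw [Finset.sum_congr rfl (fun i _ => hpt i), Finset.sum_sub_distrib,
      ← Finset.mul_sum, Finset.sum_boole]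
    simp [hF, hI, Nat.card_Icc]
  -- upper bound: members of F have large κ
  have hup : ∀ i ∈ F, q ≤ 2 * κ i + 3 := by
    intro i hiF
    have hiI : i ∈ I := (Finset.mem_filter.mp hiF).1
    have hge : (1:ℝ)/2 ≤ Int.fract (w i) := not_lt.mp (Finset.mem_filter.mp hiF).2
    obtain ⟨m, h1, h2⟩ := h i hiI
    set r := w i - (m:ℝ) with hr
    have hfrr : Int.fract (w i) = Int.fract r := by rw [hr, Int.fract_sub_intCast]
    have hκq : κ i < q := hκlt i hiI
    have hκq' : (κ i : ℝ) + 1 ≤ q := by exact_mod_cast Nat.succ_le_of_lt hκq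
    have hr0 : 0 ≤ r := by nlinarith [Nat.cast_nonneg (α := ℝ) (κ i)]
    by_cases hr1 : r < 1
    · have hfr2 : Int.fract r = r := Int.fract_eq_self.mpr ⟨hr0, hr1⟩
      have h12 : (1:ℝ)/2 ≤ r := by rw [hfrr, hfr2] at hge; exact hge
      have hmul : q * (1/2 : ℝ) ≤ q * r := by
        exact mul_le_mul_of_nonneg_left h12 (le_of_lt hq0)
      have : (q:ℝ) < 2 * (κ i : ℝ) + 4 := by nlinarith
      have : q < 2 * κ i + 4 := by exact_mod_cast this
      omega
    · exfalso
      push_neg at hr1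
      have hr2 : r < 2 := by nlinarith
      have e1 : Int.fract (r - 1) = r - 1 :=
        Int.fract_eq_self.mpr ⟨by linarith, by linarith⟩
      have e2 : Int.fract (r - 1) = Int.fract r := by
        rw [show r - 1 = r + (-1 : ℤ) by push_cast; ring, Int.fract_add_intCast]
      have hfr2 : Int.fract r = r - 1 := by rw [← e2, e1]
      have h12 : (1:ℝ)/2 ≤ r - 1 := by rw [hfrr, hfr2] at hge; exact hge
      have hmul : q * (1/2 : ℝ) ≤ q * (r - 1) := by
        exact mul_le_mul_of_nonneg_left h12 (le_of_lt hq0)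
      nlinarith
  -- image of I under κ is all of range q
  have himg : I.image κ = Finset.range q := by
    apply Finset.eq_of_subset_of_card_le
    · intro k hk
      obtain ⟨i, hiI, rfl⟩ := Finset.mem_image.mp hk
      exact Finset.mem_range.mpr (hκlt i hiI)
    · rw [Finset.card_range, Finset.card_image_of_injOn hκinj]
      simp [hI, Nat.card_Icc]
  -- lower bound: middle k's are achieved within F
  have hlow : ∀ k, q ≤ 2 * k → k + 2 ≤ q → ∃ i ∈ F, κ i = k := by
    intro k hk1 hk2
    have hkr : k ∈ Finset.range q := Finset.mem_range.mpr (by omega)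
    rw [← himg] at hkr
    obtain ⟨i, hiI, hik⟩ := Finset.mem_image.mp hkr
    refine ⟨i, ?_, hik⟩
    obtain ⟨m, h1, h2⟩ := h i hiI
    rw [hik] at h1 h2
    set r := w i - (m:ℝ) with hr
    have hk1' : (q:ℝ) ≤ 2 * k := by exact_mod_cast hk1
    have hk2' : (k:ℝ) + 2 ≤ q := by exact_mod_cast hk2
    have hr1 : r < 1 := by nlinarith
    have hr0 : 0 ≤ r := by nlinarith [Nat.cast_nonneg (α := ℝ) k]
    have hfr2 : Int.fract (w i) = r := by
      rw [show Int.fract (w i) = Int.fract r by rw [hr, Int.fract_sub_intCast]]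
      exact Int.fract_eq_self.mpr ⟨hr0, hr1⟩
    have h12 : (1:ℝ)/2 ≤ r := by nlinarith
    refine Finset.mem_filter.mpr ⟨hiI, ?_⟩
    rw [hfr2]; linarith
  -- cardinality bounds
  have hNup : F.card ≤ q - (q-2)/2 := by
    have hsub : F.image κ ⊆ Finset.Ico ((q-2)/2) q := by
      intro k hk
      obtain ⟨i, hiF, rfl⟩ := Finset.mem_image.mp hk
      have h1 := hup i hiF
      have h2 := hκlt i (Finset.mem_filter.mp hiF).1
      exact Finset.mem_Ico.mpr ⟨by omega, h2⟩
    have hinj' : Set.InjOn κ F := hκinj.mono (by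
      intro x hx; exact Finset.mem_Icc.mp ((Finset.mem_filter.mp hx).1) |> fun h => by
        simpa [hI] using (Finset.mem_filter.mp hx).1)
    calc F.card = (F.image κ).card := (Finset.card_image_of_injOn hinj').symm
      _ ≤ (Finset.Ico ((q-2)/2) q).card := Finset.card_le_card hsub
      _ = q - (q-2)/2 := by rw [Nat.card_Ico]
  have hNlow : (q-2) + 1 - (q+1)/2 ≤ F.card := by
    have hsub : Finset.Icc ((q+1)/2) (q-2) ⊆ F.image κ := by
      intro k hk
      have hk' := Finset.mem_Icc.mp hk
      obtain ⟨i, hiF, hik⟩ := hlow k (by omega) (by omega)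
      exact Finset.mem_image.mpr ⟨i, hiF, hik⟩
    calc (q-2) + 1 - (q+1)/2 = (Finset.Icc ((q+1)/2) (q-2)).card := by rw [Nat.card_Icc]
      _ ≤ (F.image κ).card := Finset.card_le_card hsub
      _ ≤ F.card := Finset.card_image_le
  rw [hsum, abs_le]
  constructor
  · have : F.card ≤ q - (q-2)/2 := hNup
    omega
  · omega

lemma abs_zsum_le (α θ : ℝ) (q : ℕ) (hq2 : 2 ≤ q) (p : ℤ)
    (hcop : IsCoprime p (q : ℤ))
    (happ : |α - p / q| * q ^ 2 < 1) :
    |∑ i ∈ Finset.Icc 1 q, zCode α θ i| ≤ 3 := by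
  have hq0 : (0:ℝ) < q := by positivity
  set ε : ℝ := α - (p:ℝ)/q with hε_def
  set t : ℕ → ℝ := fun i => θ + i * ((p:ℝ)/q) with ht_def
  set s : ℝ := Int.fract ((q:ℝ) * θ) with hs_def
  have hs0 : 0 ≤ s := Int.fract_nonneg _
  have hs1 : s < 1 := Int.fract_lt_one _
  set A : ℕ → ℤ := fun i => ⌊(q:ℝ) * Int.fract (t i)⌋ with hA_def
  have hA0 : ∀ i, 0 ≤ A i := by
    intro i
    exact Int.floor_nonneg.mpr (mul_nonneg (le_of_lt hq0) (Int.fract_nonneg _))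
  have hAq : ∀ i, A i < q := by
    intro i
    apply Int.floor_lt.mpr
    push_cast
    calc (q:ℝ) * Int.fract (t i) < q * 1 :=
      (mul_lt_mul_iff_right₀ hq0).mpr (Int.fract_lt_one _)
    _ = q := mul_one _
  have key : ∀ i : ℕ, (q:ℝ) * Int.fract (t i) = A i + s := by
    intro i
    have h1 : Int.fract ((q:ℝ) * Int.fract (t i)) = s := by
      have e1 : (q:ℝ) * Int.fract (t i) = (q:ℝ) * (t i) - ((q : ℤ) * ⌊t i⌋ : ℤ) := by
        rw [← Int.self_sub_floor]
        push_cast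
        ring
      rw [e1, Int.fract_sub_intCast]
      have e2 : (q:ℝ) * (t i) = (q:ℝ) * θ + ((i : ℤ) * p : ℤ) := by
        simp only [ht_def]
        push_cast
        field_simp
      rw [e2, Int.fract_add_intCast]
    conv_lhs => rw [← Int.floor_add_fract ((q:ℝ) * Int.fract (t i))]
    rw [h1, hA_def]
  have hAinj : ∀ i ∈ Finset.Icc 1 q, ∀ j ∈ Finset.Icc 1 q, A i = A j → i = j := by
    intro i hi j hj hij
    have hfr : Int.fract (t i) = Int.fract (t j) := by
      have e1 := key i
      have e2 := key j
      rw [hij] at e1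
      have : (q:ℝ) * Int.fract (t i) = (q:ℝ) * Int.fract (t j) := by rw [e1, e2]
      exact mul_left_cancel₀ (ne_of_gt hq0) this
    obtain ⟨z, hz⟩ := Int.fract_eq_fract.mp hfr
    have hz' : ((i:ℝ) - j) * p = z * q := by
      have : t i - t j = ((i:ℝ) - j) * (p/q) := by simp only [ht_def]; ring
      rw [this] at hz
      field_simp at hz
      linarith [hz]
    have hzint : ((i:ℤ) - j) * p = z * q := by exact_mod_cast hz'
    have hdvd : (q:ℤ) ∣ ((i:ℤ) - j) := by
      have : (q:ℤ) ∣ ((i:ℤ) - j) * p := Dvd.intro z (by linarith [hzint])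
      exact (hcop.symm).dvd_of_dvd_mul_right this
    obtain ⟨c, hc⟩ := hdvd
    have hi' := Finset.mem_Icc.mp hi
    have hj' := Finset.mem_Icc.mp hj
    have hq0' : (0:ℤ) < q := by exact_mod_cast hq0
    have hc0 : c = 0 := by
      rcases lt_trichotomy c 0 with h | h | h
      · nlinarith [hc, hi'.1, hi'.2, hj'.1, hj'.2]
      · exact h
      · nlinarith [hc, hi'.1, hi'.2, hj'.1, hj'.2]
    have : (i:ℤ) = j := by rw [hc0, mul_zero] at hc; linarith
    exact_mod_cast this
  -- the jitter is small
  have hjit : ∀ i ∈ Finset.Icc 1 q, |(q:ℝ) * i * ε| < 1 := by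
    intro i hi
    have hi' := Finset.mem_Icc.mp hi
    have hiq : (i:ℝ) ≤ q := by exact_mod_cast hi'.2
    have hi0 : (0:ℝ) ≤ i := Nat.cast_nonneg _
    have : |(q:ℝ) * i * ε| = (q:ℝ) * i * |ε| := by
      rw [abs_mul, abs_of_nonneg (by positivity : (0:ℝ) ≤ (q:ℝ) * i)]
    rw [this]
    calc (q:ℝ) * i * |ε| ≤ (q:ℝ) * q * |ε| := by
          apply mul_le_mul_of_nonneg_right ?_ (abs_nonneg _)
          exact mul_le_mul_of_nonneg_left hiq (le_of_lt hq0)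
      _ = |ε| * q^2 := by ring
      _ < 1 := happ
  -- central decomposition
  have hdec : ∀ i : ℕ, (q:ℝ) * ((θ + i * α) - ⌊t i⌋) = A i + s + (q:ℝ) * i * ε := by
    intro i
    have e1 : θ + i * α - ⌊t i⌋ = Int.fract (t i) + i * ε := by
      rw [← Int.self_sub_floor]
      simp only [ht_def, hε_def]
      ring
    rw [e1, mul_add, key i]
    ring
  rw [show (∑ i ∈ Finset.Icc 1 q, zCode α θ i)
      = ∑ i ∈ Finset.Icc 1 q, (if Int.fract ((fun i : ℕ => θ + i * α) i) < 1/2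
        then (1:ℤ) else -1) from rfl]
  by_cases hsgn : 0 ≤ ε
  · -- κ i = (A i).toNat
    apply key_count q hq2 _ (fun i => (A i).toNat)
    · intro i _
      have := hAq i
      have := hA0 i
      omega
    · intro i hi j hj hij
      simp only at hij
      apply hAinj i (by simpa using hi) j (by simpa using hj)
      have := hA0 i; have := hA0 j; omega
    · intro i hi
      have e3 : ((A i).toNat : ℝ) = (A i : ℝ) := by
        exact_mod_cast Int.toNat_of_nonneg (hA0 i)
      have hnn : 0 ≤ (q:ℝ) * i * ε := by positivity
      have hlt1 : (q:ℝ) * i * ε < 1 := lt_of_le_of_lt (le_abs_self _) (hjit i hi)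
      refine ⟨⌊t i⌋, ?_, ?_⟩
      · show (((A i).toNat : ℕ) : ℝ) ≤ (q:ℝ) * ((θ + i * α) - (⌊t i⌋ : ℤ))
        rw [hdec i, e3]
        linarith
      · show (q:ℝ) * ((θ + i * α) - (⌊t i⌋ : ℤ)) < (((A i).toNat : ℕ) : ℝ) + 2
        rw [hdec i, e3]
        linarith
  · -- ε < 0 ; κ i = if (A i).toNat = 0 then q - 1 else (A i).toNat - 1
    push_neg at hsgn
    apply key_count q hq2 _ (fun i => if (A i).toNat = 0 then q - 1 else (A i).toNat - 1)
    · intro i _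
      have := hAq i
      have := hA0 i
      split <;> omega
    · intro i hi j hj hij
      simp only at hij
      apply hAinj i (by simpa using hi) j (by simpa using hj)
      have h1 := hAq i; have h2 := hA0 i
      have h3 := hAq j; have h4 := hA0 j
      have hq' : (2:ℤ) ≤ q := by exact_mod_cast hq2
      split at hij <;> split at hij <;> omega
    · intro i hi
      have hi' := Finset.mem_Icc.mp hi
      have hjit' : |(q:ℝ) * i * ε| < 1 := hjit i hi
      have hneg : (q:ℝ) * i * ε ≤ 0 := by
        apply mul_nonpos_of_nonneg_of_nonpos (by positivity) (le_of_lt hsgn)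
      have hlow : -1 < (q:ℝ) * i * ε := by
        have := abs_lt.mp hjit'
        linarith [this.1]
      by_cases hA : (A i).toNat = 0
      · have hAeq : (A i : ℝ) = 0 := by
          have h2 := hA0 i
          have : A i = 0 := by omega
          exact_mod_cast this
        have hcast : ((q - 1 : ℕ) : ℝ) = (q:ℝ) - 1 := by
          rw [Nat.cast_sub (by omega : (1:ℕ) ≤ q)]; norm_num
        have e : (q:ℝ) * ((θ + i * α) - ((⌊t i⌋ - 1 : ℤ) : ℝ))
            = (A i : ℝ) + s + (q:ℝ) * i * ε + q := by
          push_cast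
          have h5 := hdec i
          push_cast at h5
          linarith
        refine ⟨⌊t i⌋ - 1, ?_, ?_⟩
        · show ((if (A i).toNat = 0 then q - 1 else (A i).toNat - 1 : ℕ) : ℝ)
            ≤ (q:ℝ) * ((θ + i * α) - ((⌊t i⌋ - 1 : ℤ) : ℝ))
          rw [if_pos hA, e, hcast, hAeq]
          linarith
        · show (q:ℝ) * ((θ + i * α) - ((⌊t i⌋ - 1 : ℤ) : ℝ))
            < ((if (A i).toNat = 0 then q - 1 else (A i).toNat - 1 : ℕ) : ℝ) + 2
          rw [if_pos hA, e, hcast, hAeq]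
          linarith
      · have e3 : ((A i).toNat : ℝ) = (A i : ℝ) := by
          exact_mod_cast Int.toNat_of_nonneg (hA0 i)
        have hcast : (((A i).toNat - 1 : ℕ) : ℝ) = (A i : ℝ) - 1 := by
          rw [Nat.cast_sub (by omega : (1:ℕ) ≤ (A i).toNat), e3]; norm_num
        refine ⟨⌊t i⌋, ?_, ?_⟩
        · show ((if (A i).toNat = 0 then q - 1 else (A i).toNat - 1 : ℕ) : ℝ)
            ≤ (q:ℝ) * ((θ + i * α) - (⌊t i⌋ : ℤ))
          rw [if_neg hA, hdec i, hcast]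
          linarith
        · show (q:ℝ) * ((θ + i * α) - (⌊t i⌋ : ℤ))
            < ((if (A i).toNat = 0 then q - 1 else (A i).toNat - 1 : ℕ) : ℝ) + 2
          rw [if_neg hA, hdec i, hcast]
          linarith

open GenContFract

lemma cf_facts (α : ℝ) (hα : Irrational α) (n : ℕ) (qn qn1 : ℕ)
    (hqn : (qn : ℝ) = (GenContFract.of α).dens n)
    (hqn1 : (qn1 : ℝ) = (GenContFract.of α).dens (n + 1))
    (hlt : qn < qn1) :
    1 ≤ qn ∧ ∃ p : ℤ, IsCoprime p (qn : ℤ) ∧ |α - p / qn| * qn ^ 2 < 1 := by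
  have not_term : ∀ m, ¬(GenContFract.of α).TerminatedAt m := by
    intro m hterm
    obtain ⟨r, hr⟩ := GenContFract.exists_rat_eq_of_terminates ⟨m, hterm⟩
    exact hα ⟨r, hr.symm⟩
  -- the continuants are integers
  have haux : ∀ m, (∃ z : ℤ, ((GenContFract.of α).contsAux m).a = z) ∧
      (∃ z : ℤ, ((GenContFract.of α).contsAux m).b = z) := by
    intro m
    induction m using Nat.strong_induction_on with
    | _ m ih =>
      match m with
      | 0 =>
        rw [GenContFract.zeroth_contAux_eq_one_zero]
        exact ⟨⟨1, by norm_num⟩, ⟨0, by norm_num⟩⟩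
      | 1 =>
        rw [GenContFract.first_contAux_eq_h_one, GenContFract.of_h_eq_floor]
        exact ⟨⟨⌊α⌋, by norm_num⟩, ⟨1, by norm_num⟩⟩
      | (m + 2) =>
        obtain ⟨gp, hgp⟩ : ∃ gp, (GenContFract.of α).s.get? m = some gp :=
          Option.ne_none_iff_exists'.mp (not_term m)
        have hgpa : gp.a = 1 := of_partNum_eq_one (partNum_eq_s_a hgp)
        obtain ⟨b, hgpb⟩ : ∃ z : ℤ, gp.b = (z : ℝ) :=
          exists_int_eq_of_partDen (partDen_eq_s_b hgp)
        have hrec := contsAux_recurrence hgp rfl rfl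
        obtain ⟨⟨za, hza⟩, ⟨zb, hzb⟩⟩ := ih m (by omega)
        obtain ⟨⟨za', hza'⟩, ⟨zb', hzb'⟩⟩ := ih (m+1) (by omega)
        rw [hrec]
        refine ⟨⟨b * za' + za, ?_⟩, ⟨b * zb' + zb, ?_⟩⟩ <;>
          simp [hgpa, hgpb, hza, hzb, hza', hzb'] <;> push_cast <;> ring
  obtain ⟨P, hP⟩ := (haux (n+1)).1
  obtain ⟨P', hP'⟩ := (haux (n+2)).1
  have hnum : (GenContFract.of α).nums n = (P : ℝ) := by
    rw [num_eq_conts_a, nth_cont_eq_succ_nth_contAux]; exact hP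
  have hnum' : (GenContFract.of α).nums (n+1) = (P' : ℝ) := by
    rw [num_eq_conts_a, nth_cont_eq_succ_nth_contAux]; exact hP'
  -- one ≤ qn
  have hq1 : 1 ≤ qn := by
    have hfib : ((Nat.fib (n+1) : ℝ)) ≤ (GenContFract.of α).dens n :=
      succ_nth_fib_le_of_nth_den (Or.inr (not_term _))
    have : (1:ℝ) ≤ (qn : ℝ) := by
      rw [hqn]
      refine le_trans ?_ hfib
      have : 1 ≤ Nat.fib (n+1) := Nat.fib_pos.mpr (Nat.succ_pos n)
      exact_mod_cast this
    exact_mod_cast this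
  have hq0 : (0:ℝ) < qn := by positivity
  have hq10 : (0:ℝ) < qn1 := by
    have : (0:ℕ) < qn1 := by omega
    exact_mod_cast this
  -- determinant / coprimality
  have hdet : P * (qn1 : ℤ) - (qn : ℤ) * P' = (-1)^(n+1) := by
    have hsimp : ((SimpContFract.of α : SimpContFract ℝ) : GenContFract ℝ)
        = GenContFract.of α := rfl
    have := SimpContFract.determinant (s := SimpContFract.of α)
      (n := n) (by rw [hsimp]; exact not_term n)
    rw [hsimp, hnum, hnum', ← hqn, ← hqn1] at this
    exact_mod_cast this
  have hcop : IsCoprime P (qn : ℤ) := by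
    rcases Nat.even_or_odd (n+1) with he | ho
    · refine ⟨(qn1 : ℤ), -P', ?_⟩
      rw [he.neg_one_pow] at hdet
      linarith [hdet]
    · refine ⟨-(qn1 : ℤ), P', ?_⟩
      rw [ho.neg_one_pow] at hdet
      linarith [hdet]
  -- approximation
  have happrox : |α - (P:ℝ) / qn| ≤ 1 / ((qn:ℝ) * qn1) := by
    have := abs_sub_convs_le (v := α) (n := n) (not_term n)
    rw [conv_eq_num_div_den, hnum, ← hqn, ← hqn1] at this
    exact this
  refine ⟨hq1, P, hcop, ?_⟩
  have hlt' : (qn : ℝ) < qn1 := by exact_mod_cast hlt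
  calc |α - (P:ℝ) / qn| * qn ^ 2 ≤ (1 / ((qn:ℝ) * qn1)) * qn ^ 2 := by
        apply mul_le_mul_of_nonneg_right happrox (by positivity)
    _ = (qn : ℝ) / qn1 := by field_simp
    _ < 1 := by rw [div_lt_one hq10]; exact hlt'

lemma zCode_le_one (α θ : ℝ) (i : ℕ) : zCode α θ i ≤ 1 := by
  unfold zCode; split <;> norm_num

lemma walk_le_self (α θ : ℝ) (m : ℕ) : walk α θ m ≤ m := by
  calc walk α θ m ≤ ∑ i ∈ Finset.Icc 1 m, 1 :=
        Finset.sum_le_sum (fun i _ => zCode_le_one α θ i)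
    _ = m := by simp [Nat.card_Icc]

lemma walk_bddAbove (α θ : ℝ) (k : ℕ) :
    BddAbove {m : ℤ | ∃ ℓ, 1 ≤ ℓ ∧ ℓ ≤ k ∧ walk α θ ℓ = m} := by
  refine ⟨k, ?_⟩
  rintro m ⟨ℓ, h1, h2, rfl⟩
  calc walk α θ ℓ ≤ ℓ := walk_le_self α θ ℓ
    _ ≤ (k:ℤ) := by exact_mod_cast h2

lemma walk_window (α θ : ℝ) (a q : ℕ) :
    walk α θ (a + q) = walk α θ a + ∑ i ∈ Finset.Icc 1 q, zCode α (θ + a * α) i := by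
  have h1 : ∀ m : ℕ, Finset.Icc 1 m = Finset.Ioc 0 m := by
    intro m; rw [← Finset.Icc_add_one_left_eq_Ioc]; rfl
  unfold walk
  rw [h1, h1, h1, ← Finset.sum_Ioc_consecutive _ (Nat.zero_le a) (Nat.le_add_right a q)]
  congr 1
  rw [show Finset.Ioc a (a + q) = Finset.map (addLeftEmbedding a) (Finset.Ioc 0 q) by
    rw [Finset.map_add_left_Ioc]; norm_num]
  rw [Finset.sum_map]
  apply Finset.sum_congr rfl
  intro i _
  show zCode α θ (a + i) = zCode α (θ + a * α) i
  unfold zCode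
  congr 2
  push_cast
  ring

lemma walk_step (α θ : ℝ) (q : ℕ)
    (hblock : ∀ θ' : ℝ, |∑ i ∈ Finset.Icc 1 q, zCode α θ' i| ≤ 3)
    (r : ℕ) : ∀ k : ℕ, walk α θ (r + q * k) ≤ walk α θ r + 3 * k := by
  intro k
  induction k with
  | zero => simp
  | succ k ih =>
    have : r + q * (k + 1) = (r + q * k) + q := by ring
    rw [this, walk_window]
    have hb := hblock (θ + (r + q * k) * α)
    have := (abs_le.mp hb).2
    push_cast
    push_cast at ih
    linarith

theorem maxWalk_growth' (α : ℝ) (θ : ℝ) (t qn : ℕ)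
    (hq1 : 1 ≤ qn) (ht1 : qn < t)
    (hblock : ∀ θ' : ℝ, |∑ i ∈ Finset.Icc 1 qn, zCode α θ' i| ≤ 3) :
    maxWalk α θ t ≤ maxWalk α θ qn + 3 * ⌈(t : ℝ) / (qn : ℝ)⌉ := by
  have hq0 : (0:ℝ) < qn := by exact_mod_cast hq1
  apply csSup_le
  · exact ⟨walk α θ 1, 1, le_rfl, by omega, rfl⟩
  rintro m ⟨ℓ, hℓ1, hℓ2, rfl⟩
  obtain ⟨k, r, hℓeq, hr1, hrq⟩ : ∃ k r, ℓ = r + qn * k ∧ 1 ≤ r ∧ r ≤ qn := by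
    refine ⟨(ℓ - 1) / qn, (ℓ - 1) % qn + 1, ?_, by omega, ?_⟩
    · have hdm := Nat.div_add_mod (ℓ - 1) qn
      omega
    · have hmod : (ℓ - 1) % qn < qn := Nat.mod_lt _ (by omega)
      omega
  have hw : walk α θ ℓ ≤ walk α θ r + 3 * k := by
    rw [hℓeq]; exact walk_step α θ qn hblock r k
  have hmax : walk α θ r ≤ maxWalk α θ qn :=
    le_csSup (walk_bddAbove α θ qn) ⟨r, hr1, hrq, rfl⟩
  have hk_ceil : (k : ℤ) < ⌈(t : ℝ) / (qn : ℝ)⌉ := by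
    rw [Int.lt_ceil]
    rw [lt_div_iff₀ hq0]
    push_cast
    have hkq : qn * k ≤ ℓ - 1 := by omega
    have : qn * k < t := by omega
    calc (k:ℝ) * qn = (qn * k : ℕ) := by push_cast; ring
      _ < t := by exact_mod_cast this
  have : (3:ℤ) * k ≤ 3 * ⌈(t : ℝ) / (qn : ℝ)⌉ := by omega
  linarith

/-- For `q_n < t ≤ q_{n+1}`, `M(θ, t) ≤ M(θ, q_n) + 3⌈t/q_n⌉`. -/
theorem maxWalk_growth (α : ℝ) (hα : Irrational α)
    (hα01 : α ∈ Set.Ioo (0 : ℝ) 1) (n : ℕ) (qn qn1 : ℕ)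
    (hqn : (qn : ℝ) = (GenContFract.of α).dens n)
    (hqn1 : (qn1 : ℝ) = (GenContFract.of α).dens (n + 1))
    (θ : ℝ) (t : ℕ) (ht1 : qn < t) (ht2 : t ≤ qn1) :
    maxWalk α θ t ≤ maxWalk α θ qn + 3 * ⌈(t : ℝ) / (qn : ℝ)⌉ := by
  obtain ⟨hq1, p, hcop, happ⟩ := cf_facts α hα n qn qn1 hqn hqn1 (by omega)
  have hblock : ∀ θ' : ℝ, |∑ i ∈ Finset.Icc 1 qn, zCode α θ' i| ≤ 3 := by
    intro θ'
    rcases eq_or_lt_of_le hq1 with h1 | h2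
    · rw [← h1]
      have : Finset.Icc 1 1 = {1} := rfl
      rw [this, Finset.sum_singleton]
      unfold zCode
      split <;> norm_num
    · exact abs_zsum_le α θ' qn (by omega) p hcop happ
  exact maxWalk_growth' α θ t qn hq1 ht1 hblock
end

section
/- Let α ∈ (0,1) be irrational with best approximation denominators q_n, and let Q_n = {kα mod 1 : 1 ≤ k ≤ q_n}. If q_n = 2r is even and n is even, then the point rα mod 1 equals 1/2 + (1/2){q_nα}. -/
open GenContFract

/-- If `q_n = 2r` is even and `n` is even, then `rα mod 1 = 1/2 + (1/2){q_nα}`. -/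
theorem midpoint_of_even_denominator (α : ℝ) (hα : Irrational α)
    (hα01 : α ∈ Set.Ioo (0 : ℝ) 1) (n : ℕ) (qn r : ℕ)
    (hqn : (qn : ℝ) = (GenContFract.of α).dens n) (hr : qn = 2 * r)
    (hn : Even n) :
    Int.fract ((r : ℝ) * α) = 1 / 2 + (1 / 2) * Int.fract ((qn : ℝ) * α) := by
  set g := GenContFract.of α with hg
  -- non-termination
  have hnoterm : ∀ m, ¬ g.TerminatedAt m := by
    intro m hm
    obtain ⟨q, hq⟩ := (GenContFract.terminates_iff_rat α).mp ⟨m, hm⟩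
    exact hα ⟨q, hq.symm⟩
  have hstream : ∀ m, ∃ ifp, IntFractPair.stream α m = some ifp := by
    intro m
    cases m with
    | zero => exact ⟨_, IntFractPair.stream_zero α⟩
    | succ m =>
      have h := hnoterm m
      rw [of_terminatedAt_n_iff_succ_nth_intFractPair_stream_eq_none] at h
      exact Option.ne_none_iff_exists'.mp h
  -- contsAux entries are integers
  have hint : ∀ m, (∃ a : ℤ, (g.contsAux m).a = a) ∧ (∃ b : ℤ, (g.contsAux m).b = b) := by
    have key : ∀ m, ((∃ a : ℤ, (g.contsAux m).a = a) ∧ (∃ b : ℤ, (g.contsAux m).b = b)) ∧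
        ((∃ a : ℤ, (g.contsAux (m+1)).a = a) ∧ (∃ b : ℤ, (g.contsAux (m+1)).b = b)) := by
      intro m
      induction m with
      | zero =>
        refine ⟨⟨⟨1, ?_⟩, ⟨0, ?_⟩⟩, ⟨⟨⌊α⌋, ?_⟩, ⟨1, ?_⟩⟩⟩ <;>
          simp [contsAux, hg, of_h_eq_floor]
      | succ m ih =>
        refine ⟨ih.2, ?_⟩
        obtain ⟨gp, s_nth_eq⟩ : ∃ gp, g.s.get? m = some gp :=
          Option.ne_none_iff_exists'.mp (hnoterm m)
        have ha1 : gp.a = 1 := of_partNum_eq_one (partNum_eq_s_a s_nth_eq)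
        obtain ⟨z, hz⟩ : ∃ z : ℤ, gp.b = (z : ℝ) :=
          exists_int_eq_of_partDen (partDen_eq_s_b s_nth_eq)
        obtain ⟨⟨pa, hpa⟩, ⟨pb, hpb⟩⟩ := ih.1
        obtain ⟨⟨ca, hca⟩, ⟨cb, hcb⟩⟩ := ih.2
        have hrec := contsAux_recurrence s_nth_eq rfl rfl (g := g)
        rw [hrec]
        constructor
        · exact ⟨z * ca + pa, by simp [nextConts, nextNum, ha1, hz, hpa, hca]⟩
        · exact ⟨z * cb + pb, by simp [nextConts, nextDen, ha1, hz, hpb, hcb]⟩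
    exact fun m => (key m).1
  -- integer values of numerators and denominators
  obtain ⟨p, hp⟩ : ∃ p : ℤ, g.nums n = (p : ℝ) := (hint (n+1)).1
  obtain ⟨p', hp'⟩ : ∃ p' : ℤ, g.nums (n+1) = (p' : ℝ) := (hint (n+2)).1
  obtain ⟨q', hq'⟩ : ∃ q' : ℤ, g.dens (n+1) = (q' : ℝ) := (hint (n+2)).2
  -- denominators are positive
  have hfibn : (Nat.fib (n+1) : ℝ) ≤ g.dens n :=
    succ_nth_fib_le_of_nth_den (Or.inr (hnoterm _))
  have hfibn' : (Nat.fib (n+2) : ℝ) ≤ g.dens (n+1) :=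
    succ_nth_fib_le_of_nth_den (Or.inr (hnoterm _))
  have hdn : (1 : ℝ) ≤ g.dens n := by
    refine le_trans ?_ hfibn
    exact_mod_cast Nat.one_le_iff_ne_zero.mpr (Nat.fib_pos.mpr n.succ_pos).ne'
  have hdn' : (1 : ℝ) ≤ g.dens (n+1) := by
    refine le_trans ?_ hfibn'
    exact_mod_cast Nat.one_le_iff_ne_zero.mpr (Nat.fib_pos.mpr (n+1).succ_pos).ne'
  have hqnpos : (0 : ℝ) < qn := by rw [hqn]; linarith
  have hqnne : (qn : ℝ) ≠ 0 := hqnpos.ne'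
  -- determinant
  have hdet := (SimpContFract.of α).determinant (hnoterm n)
  have hdetℤ : p * q' - qn * p' = -1 := by
    have : (↑(SimpContFract.of α) : GenContFract ℝ) = g := rfl
    rw [this, hp, hp', hq', ← hqn] at hdet
    have hpow : (-1 : ℝ) ^ (n + 1) = -1 := by
      obtain ⟨k, hk⟩ := hn
      rw [hk]; rw [show k + k + 1 = 2 * k + 1 by ring]
      simp [pow_succ, pow_mul]
    rw [hpow] at hdet
    exact_mod_cast hdet
  -- p is odd
  have hpodd : Odd p := by
    rcases Int.even_or_odd p with he | ho
    · exfalso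
      have : Even (p * q' - (qn : ℤ) * p') := by
        refine Even.sub (he.mul_right _) ?_
        have : Even (qn : ℤ) := by exact_mod_cast (⟨r, by omega⟩ : Even qn)
        exact this.mul_right _
      rw [hdetℤ] at this
      exact (by decide : ¬ Even (-1 : ℤ)) this
    · exact ho
  -- sign of the error
  obtain ⟨ifp, hifp⟩ := hstream n
  have hfrne : ifp.fr ≠ 0 := by
    intro h0
    obtain ⟨ifp', hifp'⟩ := hstream (n+1)
    rw [IntFractPair.stream_eq_none_of_fr_eq_zero hifp h0] at hifp'
    cases hifp'
  have hfrpos : 0 < ifp.fr := (IntFractPair.nth_stream_fr_nonneg hifp).lt_of_ne' hfrne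
  have hsub := sub_convs_eq hifp (v := α)
  simp only [if_neg hfrne] at hsub
  have hBpos : 0 < (g.contsAux (n+1)).b := by
    have : g.dens n = (g.contsAux (n+1)).b := rfl
    linarith [this ▸ hdn]
  have hpBnonneg : 0 ≤ (g.contsAux n).b := zero_le_of_contsAux_b
  have hεpos : 0 < α - g.convs n := by
    rw [hsub]
    have hpow : (-1 : ℝ) ^ n = 1 := hn.neg_one_pow
    rw [hpow]
    positivity
  have habs := abs_sub_convs_le (hnoterm n) (v := α)
  rw [← hg] at habs
  rw [abs_of_pos hεpos] at habs
  -- convs n = p / qn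
  have hconv : g.convs n = (p : ℝ) / qn := by
    rw [conv_eq_num_div_den, hp, hqn]
  -- ε₀ := qn * α - p ∈ (0,1)
  have hε0pos : 0 < (qn : ℝ) * α - p := by
    have : (qn : ℝ) * α - p = qn * (α - g.convs n) := by
      rw [hconv]; field_simp
    rw [this]
    positivity
  have hε0lt : (qn : ℝ) * α - p < 1 := by
    have heq : (qn : ℝ) * α - p = qn * (α - g.convs n) := by
      rw [hconv]; field_simp
    have hle : (qn : ℝ) * α - p ≤ 1 / g.dens (n+1) := by
      rw [heq, hqn]
      calc (g.dens n) * (α - g.convs n) ≤ g.dens n * (1 / (g.dens n * g.dens (n+1))) := by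
            apply mul_le_mul_of_nonneg_left habs (by linarith)
        _ = 1 / g.dens (n+1) := by field_simp
    have h1 : 1 / g.dens (n+1) ≤ 1 := by
      rw [div_le_one (by linarith)]; exact hdn'
    rcases lt_or_eq_of_le (hle.trans h1) with h | h
    · exact h
    · exfalso
      apply hα
      exact ⟨(p + 1) / qn, by push_cast; field_simp; linarith⟩
  -- fract (qn * α) = qn * α - p
  have hfract_qn : Int.fract ((qn : ℝ) * α) = (qn : ℝ) * α - p := by
    have : (qn : ℝ) * α = p + ((qn : ℝ) * α - p) := by ring
    rw [this, Int.fract_intCast_add, Int.fract_eq_self.mpr ⟨le_of_lt hε0pos, hε0lt⟩]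
    ring
  -- final computation
  obtain ⟨m, hm⟩ := hpodd
  have hrα : (r : ℝ) * α = m + (1 + ((qn : ℝ) * α - p)) / 2 := by
    have h2r : (qn : ℝ) = 2 * r := by exact_mod_cast hr
    have hpm : (p : ℝ) = 2 * m + 1 := by exact_mod_cast hm
    linear_combination (-(α/2)) * h2r + (1/2) * hpm
  rw [hrα, Int.fract_intCast_add, Int.fract_eq_self.mpr ⟨by linarith, by linarith⟩, hfract_qn]
  ring
end
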